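/- arXiv:1307.2537 — 15 statements merged into one kernel-verified Lean document; each statement's English description precedes it below -/
import Mathlib

section
/- If a utility maximization game with n players is (λ,μ)-coalitionally smooth for some λ,μ ≥ 0, then every strong Nash equilibrium s satisfies SW(s) ≥ (λ/(1+μ)) · OPT, where OPT is the maximum social welfare over all strategy profiles. -/
open Finset

/-- Coalitional deviation: players in `C` switch to `t`, others keep `s`. -/
def dev {n : ℕ} {S : Fin n → Type*} (s t : ∀ i, S i) (C : Finset (Fin n)) : ∀ i, S i :=
  fun i => if i ∈ C then t i else s i

/-- `N_{π(i)} = {j : π(j) ≥ π(i)}`, the suffix of the permutation starting at `i`. -/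
def suffixSet {n : ℕ} (π : Equiv.Perm (Fin n)) (i : Fin n) : Finset (Fin n) :=
  Finset.univ.filter fun j => π i ≤ π j

theorem exists_good_list {n : ℕ} {S : Fin n → Type*}
    (u : ∀ _ : Fin n, (∀ j, S j) → ℝ) (sstar s : ∀ j, S j)
    (hSNE : ∀ C : Finset (Fin n), C.Nonempty → ∀ sC : ∀ j, S j,
      ∃ i ∈ C, u i s ≥ u i (dev s sC C)) :
    ∀ C : Finset (Fin n), ∃ l : List (Fin n), l.Nodup ∧ l.toFinset = C ∧
      ∀ k (hk : k < l.length), u (l.get ⟨k, hk⟩) s ≥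
        u (l.get ⟨k, hk⟩) (dev s sstar (l.drop k).toFinset) := by
  intro C
  induction C using Finset.strongInduction with
  | _ C ih =>
    rcases C.eq_empty_or_nonempty with rfl | hne
    · exact ⟨[], by simp, by simp, by simp⟩
    · obtain ⟨i, hiC, hui⟩ := hSNE C hne sstar
      obtain ⟨l, hnd, htf, hprop⟩ := ih (C.erase i) (Finset.erase_ssubset hiC)
      have hinotl : i ∉ l := by
        intro h
        have : i ∈ C.erase i := htf ▸ List.mem_toFinset.mpr h
        simp at this
      refine ⟨i :: l, by simp [hnd, hinotl], by simp [htf, Finset.insert_erase hiC], ?_⟩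
      intro k hk
      cases k with
      | zero =>
        have h0 : (i :: l).toFinset = C := by simp [htf, Finset.insert_erase hiC]
        show u i s ≥ u i (dev s sstar ((i :: l).drop 0).toFinset)
        rw [List.drop_zero, h0]; exact hui
      | succ m =>
        have hm : m < l.length := by simpa using hk
        simpa using hprop m hm


/-- in a (λ,μ)-coalitionally smooth utility game, every strong Nash
equilibrium has social welfare at least λ/(1+μ) of the optimal. -/
theorem strong_price_of_anarchy_utility {n : ℕ} {S : Fin n → Type*}
    (u : ∀ _ : Fin n, (∀ j, S j) → ℝ)
    (hu : ∀ i s, 0 ≤ u i s)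
    (lam mu OPT : ℝ) (hlam : 0 ≤ lam) (hmu : 0 ≤ mu)
    (hOPT_ub : ∀ s : ∀ j, S j, ∑ i, u i s ≤ OPT)
    (hOPT_ach : ∃ s : ∀ j, S j, ∑ i, u i s = OPT)
    (sstar : ∀ j, S j)
    (hsmooth : ∀ (s : ∀ j, S j) (π : Equiv.Perm (Fin n)),
      ∑ i, u i (dev s sstar (suffixSet π i)) ≥ lam * OPT - mu * ∑ i, u i s)
    (s : ∀ j, S j)
    (hSNE : ∀ C : Finset (Fin n), C.Nonempty → ∀ sC : ∀ j, S j,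
      ∃ i ∈ C, u i s ≥ u i (dev s sC C)) :
    ∑ i, u i s ≥ lam / (1 + mu) * OPT := by
  obtain ⟨l, hnd, htf, hprop⟩ := exists_good_list u sstar s hSNE Finset.univ
  have hlen : l.length = n := by
    rw [← List.toFinset_card_of_nodup hnd, htf, Finset.card_univ, Fintype.card_fin]
  set e : Fin n → Fin n := fun k => l.get (Fin.cast hlen.symm k) with he
  have hinjget : Function.Injective l.get := List.nodup_iff_injective_get.mp hnd
  have heinj : Function.Injective e := by
    intro a b hab
    have := hinjget hab
    simpa [Fin.ext_iff] using congrArg Fin.val this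
  have hbij : Function.Bijective e := Finite.injective_iff_bijective.mp heinj
  obtain ⟨π, hπ⟩ : ∃ π : Equiv.Perm (Fin n), ∀ j, e (π j) = j :=
    ⟨(Equiv.ofBijective e hbij).symm, fun j => (Equiv.ofBijective e hbij).apply_symm_apply j⟩
  have hget : ∀ (j : Fin n) (h : (π j : ℕ) < l.length), l.get ⟨(π j : ℕ), h⟩ = j := by
    intro j h
    have := hπ j
    rw [he] at this
    simpa [Fin.cast] using this
  have hlt : ∀ j : Fin n, (π j : ℕ) < l.length := fun j => by
    rw [hlen]; exact (π j).isLt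
  have hgetE : ∀ (j : Fin n), l[(π j : ℕ)]'(hlt j) = j := fun j => hget j (hlt j)
  have claim : ∀ i j : Fin n, ((π i : ℕ) ≤ (π j : ℕ) ↔ j ∈ (l.drop (π i : ℕ)).toFinset) := by
    intro i j
    rw [List.mem_toFinset]
    constructor
    · intro hle
      have hd : (π j : ℕ) - (π i : ℕ) < (l.drop (π i : ℕ)).length := by
        rw [List.length_drop, hlen]
        have := (π j).isLt
        omega
      refine List.mem_iff_getElem.mpr ⟨_, hd, ?_⟩
      rw [List.getElem_drop]
      have h2 : (π i : ℕ) + ((π j : ℕ) - (π i : ℕ)) = (π j : ℕ) := by omega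
      simp only [h2]
      exact hgetE j
    · intro hmem
      obtain ⟨m, hm, hml⟩ := List.mem_iff_getElem.mp hmem
      rw [List.getElem_drop] at hml
      have hlt2 : (π i : ℕ) + m < l.length := by
        rw [List.length_drop] at hm; omega
      have : (⟨(π i : ℕ) + m, hlt2⟩ : Fin l.length) = ⟨(π j : ℕ), hlt j⟩ := by
        apply hinjget
        show l.get _ = l.get _
        rw [hget j (hlt j)]
        exact hml
      have := congrArg Fin.val this
      simp only at this
      omega
  have hsuf : ∀ i : Fin n, suffixSet π i = (l.drop (π i : ℕ)).toFinset := by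
    intro i
    ext j
    simp only [suffixSet, Finset.mem_filter, Finset.mem_univ, true_and]
    rw [Fin.le_def]
    exact claim i j
  have hkey : ∀ i : Fin n, u i s ≥ u i (dev s sstar (suffixSet π i)) := by
    intro i
    have h := hprop (π i : ℕ) (hlt i)
    rw [hget i (hlt i)] at h
    rw [hsuf i]
    exact h
  have h2 := hsmooth s π
  have h3 : ∑ i, u i (dev s sstar (suffixSet π i)) ≤ ∑ i, u i s :=
    Finset.sum_le_sum fun i _ => hkey i
  have hOPTnn : 0 ≤ OPT := by
    obtain ⟨s0, hs0⟩ := hOPT_ach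
    rw [← hs0]
    exact Finset.sum_nonneg fun i _ => hu i s0
  have hpos : (0 : ℝ) < 1 + mu := by linarith
  rw [ge_iff_le, div_mul_eq_mul_div, div_le_iff₀ hpos]
  nlinarith [h2, h3]
end

section
/- If a cost minimization game is (λ,μ)-coalitionally smooth with λ ≥ 0 and 0 ≤ μ < 1, then every strong Nash equilibrium s satisfies SC(s) ≤ (λ/(1−μ)) · SC(s*), where s* is a socially optimal profile. -/
open Finset

/-- in a (λ,μ)-coalitionally smooth cost-minimization game with
0 ≤ μ < 1, every strong Nash equilibrium has social cost at most λ/(1−μ) times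
the minimum social cost. -/
theorem strong_price_of_anarchy_cost {n : ℕ} {S : Fin n → Type*}
    (c : ∀ _ : Fin n, (∀ j, S j) → ℝ)
    (hc : ∀ i s, 0 ≤ c i s)
    (lam mu : ℝ) (hlam : 0 ≤ lam) (hmu0 : 0 ≤ mu) (hmu1 : mu < 1)
    (sstar : ∀ j, S j)
    (hopt : ∀ s : ∀ j, S j, ∑ i, c i sstar ≤ ∑ i, c i s)
    (hsmooth : ∀ (s : ∀ j, S j) (π : Equiv.Perm (Fin n)),
      ∑ i, c i (dev s sstar (suffixSet π i)) ≤ lam * ∑ i, c i sstar + mu * ∑ i, c i s)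
    (s : ∀ j, S j)
    (hSNE : ∀ C : Finset (Fin n), C.Nonempty → ∀ sC : ∀ j, S j,
      ∃ i ∈ C, c i s ≤ c i (dev s sC C)) :
    ∑ i, c i s ≤ lam / (1 - mu) * ∑ i, c i sstar := by
  classical
  have key : ∀ C : Finset (Fin n), ∃ l : List (Fin n), l.Nodup ∧ l.toFinset = C ∧
      ∀ k (hk : k < l.length), c (l.get ⟨k, hk⟩) s
        ≤ c (l.get ⟨k, hk⟩) (dev s sstar ((l.drop k).toFinset)) := by
    intro C
    induction C using Finset.strongInduction with
    | _ C ih =>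
      rcases C.eq_empty_or_nonempty with rfl | hne
      · exact ⟨[], by simp, by simp, by simp⟩
      · obtain ⟨i, hiC, hi⟩ := hSNE C hne sstar
        obtain ⟨l', hnd, htf, hcond⟩ := ih (C.erase i) (Finset.erase_ssubset hiC)
        have hinot : i ∉ l' := by
          intro h
          have := List.mem_toFinset.mpr h
          rw [htf] at this
          exact (Finset.notMem_erase i C) this
        refine ⟨i :: l', List.nodup_cons.mpr ⟨hinot, hnd⟩, ?_, ?_⟩
        · rw [List.toFinset_cons, htf, Finset.insert_erase hiC]
        · intro k hk
          cases k with
          | zero =>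
            have hT : ((i :: l').drop 0).toFinset = C := by
              rw [List.drop_zero, List.toFinset_cons, htf, Finset.insert_erase hiC]
            have hg : (i :: l').get ⟨0, hk⟩ = i := rfl
            rw [hg, hT]
            exact hi
          | succ k =>
            have hk' : k < l'.length := by simpa using hk
            simpa using hcond k hk'
  obtain ⟨l, hnd, htf, hcond⟩ := key Finset.univ
  have hlen : l.length = n := by
    have h1 : l.toFinset.card = l.length := List.toFinset_card_of_nodup hnd
    rw [htf] at h1
    simpa using h1.symm
  set f : Fin n → Fin n := fun k => l.get (Fin.cast hlen.symm k) with hf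
  have hfinj : Function.Injective f := by
    intro a b hab
    have := List.nodup_iff_injective_get.mp hnd hab
    exact Fin.cast_injective _ this
  have hfbij : Function.Bijective f := (Finite.injective_iff_bijective).mp hfinj
  set e : Equiv.Perm (Fin n) := Equiv.ofBijective f hfbij with he
  have hef : ∀ k, e k = f k := fun k => rfl
  have hmemdrop : ∀ (m : ℕ) (j : Fin n), j ∈ (l.drop m).toFinset ↔ m ≤ (e.symm j : ℕ) := by
    intro m j
    constructor
    · intro hj
      rw [List.mem_toFinset] at hj
      obtain ⟨idx, hidx, hgetj⟩ := List.getElem_of_mem hj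
      rw [List.getElem_drop] at hgetj
      have hlt : m + idx < l.length := by
        have := (List.length_drop : (l.drop m).length = l.length - m) ▸ hidx
        omega
      have : f ⟨m + idx, by omega⟩ = j := by
        simp [hf, List.get_eq_getElem]
        exact hgetj
      have : e.symm j = ⟨m + idx, by omega⟩ := by
        rw [← this, ← hef, Equiv.symm_apply_apply]
      rw [this]
      simp
    · intro hm
      rw [List.mem_toFinset]
      have hj : f (e.symm j) = j := e.apply_symm_apply j
      have hk : ((e.symm j : ℕ)) < l.length := by rw [hlen]; exact (e.symm j).isLt
      have hidx : (e.symm j : ℕ) - m < (l.drop m).length := by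
        rw [List.length_drop]; omega
      have : (l.drop m)[(e.symm j : ℕ) - m] = j := by
        simp only [List.getElem_drop, Nat.add_sub_cancel' hm]
        simpa [hf, List.get_eq_getElem] using hj
      rw [← this]
      exact List.getElem_mem _
  have hsuffix : ∀ i : Fin n, suffixSet e.symm i = (l.drop (e.symm i : ℕ)).toFinset := by
    intro i
    ext j
    rw [hmemdrop]
    simp only [suffixSet, Finset.mem_filter, Finset.mem_univ, true_and]
    exact ⟨fun h => h, fun h => h⟩
  have hstep : ∀ i : Fin n, c i s ≤ c i (dev s sstar (suffixSet e.symm i)) := by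
    intro i
    have hk : ((e.symm i : ℕ)) < l.length := by rw [hlen]; exact (e.symm i).isLt
    have hget : l.get ⟨(e.symm i : ℕ), hk⟩ = i := by
      have := e.apply_symm_apply i
      rw [hef] at this
      simpa [hf] using this
    have := hcond (e.symm i : ℕ) hk
    rw [hget] at this
    rw [hsuffix]
    exact this
  have h1 : ∑ i, c i s ≤ ∑ i, c i (dev s sstar (suffixSet e.symm i)) :=
    Finset.sum_le_sum fun i _ => hstep i
  have h2 := hsmooth s e.symm
  have hA : 0 ≤ ∑ i, c i sstar := Finset.sum_nonneg fun i _ => hc i sstar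
  have h3 : ∑ i, c i s ≤ lam * ∑ i, c i sstar + mu * ∑ i, c i s := le_trans h1 h2
  rw [div_mul_eq_mul_div, le_div_iff₀ (by linarith)]
  nlinarith [h3]
end

section
/- In a (λ,μ)-coalitionally smooth utility maximization game, every strong coarse correlated equilibrium D satisfies E_{s∼D}[SW(s)] ≥ (λ/(1+μ)) · OPT. -/
open Finset

/-- in a (λ,μ)-coalitionally smooth utility game, every strong coarse
correlated equilibrium `D` has expected social welfare at least λ/(1+μ) of the optimal. -/
theorem strong_cce_welfare {n : ℕ} {S : Fin n → Type*}
    [∀ j, Fintype (S j)] [∀ j, DecidableEq (S j)]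
    (u : ∀ _ : Fin n, (∀ j, S j) → ℝ)
    (hu : ∀ i s, 0 ≤ u i s)
    (lam mu OPT : ℝ) (hlam : 0 ≤ lam) (hmu : 0 ≤ mu)
    (hOPT_ub : ∀ s : ∀ j, S j, ∑ i, u i s ≤ OPT)
    (hOPT_ach : ∃ s : ∀ j, S j, ∑ i, u i s = OPT)
    (sstar : ∀ j, S j)
    (hsmooth : ∀ (s : ∀ j, S j) (π : Equiv.Perm (Fin n)),
      ∑ i, u i (dev s sstar (suffixSet π i)) ≥ lam * OPT - mu * ∑ i, u i s)
    (D : (∀ j, S j) → ℝ) (hD0 : ∀ s, 0 ≤ D s) (hD1 : ∑ s, D s = 1)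
    (hSCCE : ∀ C : Finset (Fin n), C.Nonempty →
      ∀ Dt : (∀ j, S j) → ℝ, (∀ t, 0 ≤ Dt t) → (∑ t, Dt t = 1) →
      ∃ i ∈ C, ∑ s, D s * u i s ≥ ∑ s, ∑ t, D s * Dt t * u i (dev s t C)) :
    ∑ s, D s * ∑ i, u i s ≥ lam / (1 + mu) * OPT := by
  classical
  -- Deviation to the point mass at sstar
  have hpoint : ∀ C : Finset (Fin n), C.Nonempty →
      ∃ i ∈ C, ∑ s, D s * u i s ≥ ∑ s, D s * u i (dev s sstar C) := by
    intro C hC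
    obtain ⟨i, hiC, hi⟩ := hSCCE C hC (fun t => if t = sstar then 1 else 0)
      (fun t => by positivity) (by simp)
    refine ⟨i, hiC, le_trans (le_of_eq ?_) hi⟩
    refine Finset.sum_congr rfl fun s _ => ?_
    rw [Finset.sum_eq_single sstar]
    · simp
    · intro t _ ht; simp [ht]
    · simp
  -- Key induction: a good ordering of any coalition
  have key : ∀ (k : ℕ) (C : Finset (Fin n)), C.card = k →
      ∃ l : List (Fin n), l.Nodup ∧ l.toFinset = C ∧
        ∀ p (hp : p < l.length),
          ∑ s, D s * u (l.get ⟨p, hp⟩) s ≥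
            ∑ s, D s * u (l.get ⟨p, hp⟩) (dev s sstar (l.drop p).toFinset) := by
    intro k
    induction k with
    | zero =>
      intro C hC
      refine ⟨[], by simp, by simpa using (Finset.card_eq_zero.mp hC).symm, ?_⟩
      intro p hp; simp at hp
    | succ k ih =>
      intro C hC
      have hCne : C.Nonempty := Finset.card_pos.mp (by omega)
      obtain ⟨i, hiC, hi⟩ := hpoint C hCne
      obtain ⟨l', nd', htf', hprop'⟩ := ih (C.erase i)
        (by rw [Finset.card_erase_of_mem hiC, hC]; rfl)
      refine ⟨i :: l', ?_, ?_, ?_⟩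
      · refine List.nodup_cons.mpr ⟨?_, nd'⟩
        intro hmem
        have : i ∈ C.erase i := htf' ▸ List.mem_toFinset.mpr hmem
        exact (Finset.notMem_erase i C) this
      · rw [List.toFinset_cons, htf', Finset.insert_erase hiC]
      · intro p hp
        match p with
        | 0 =>
          simpa [List.toFinset_cons, htf', Finset.insert_erase hiC] using hi
        | Nat.succ q =>
          have hq : q < l'.length := by simpa using hp
          simpa using hprop' q hq
  obtain ⟨l, nd, htf, hprop⟩ := key n Finset.univ (by simp)
  have hmem : ∀ x : Fin n, x ∈ l := fun x => by
    rw [← List.mem_toFinset, htf]; exact Finset.mem_univ x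
  have hlen : l.length = n := by
    have h := List.toFinset_card_of_nodup nd
    rw [htf, Finset.card_univ, Fintype.card_fin] at h
    exact h.symm
  set e := nd.getEquivOfForallMemList l hmem with he
  set π : Equiv.Perm (Fin n) := e.symm.trans (finCongr hlen) with hπ
  -- suffixSet π i is the drop at i's position
  have hsuffix : ∀ i : Fin n, suffixSet π i = (l.drop (e.symm i).val).toFinset := by
    intro i
    ext j
    simp only [suffixSet, Finset.mem_filter, Finset.mem_univ, true_and, List.mem_toFinset]
    have hπval : ∀ x : Fin n, (π x : ℕ) = (e.symm x : ℕ) := fun x => rfl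
    constructor
    · intro h
      have hle : (e.symm i).val ≤ (e.symm j).val := by
        have := Fin.le_def.mp h; simpa [hπval] using this
      have : l.get (e.symm j) = j := e.apply_symm_apply j
      rw [← this]
      have hjlt : (e.symm j).val < l.length := (e.symm j).2
      refine List.mem_iff_getElem.mpr ⟨(e.symm j).val - (e.symm i).val, ?_, ?_⟩
      · rw [List.length_drop]; omega
      · rw [List.getElem_drop]
        have : (e.symm i).val + ((e.symm j).val - (e.symm i).val) = (e.symm j).val := by omega
        simp [this, List.get_eq_getElem]
    · intro h
      obtain ⟨q, hq, hqj⟩ := List.mem_iff_getElem.mp h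
      rw [List.getElem_drop] at hqj
      have hlt : (e.symm i).val + q < l.length := by
        rw [List.length_drop] at hq; omega
      have : e ⟨(e.symm i).val + q, hlt⟩ = j := by
        simpa [he, List.Nodup.getEquivOfForallMemList, List.get_eq_getElem] using hqj
      have hej : (e.symm j : ℕ) = (e.symm i).val + q := by
        rw [← this, Equiv.symm_apply_apply]
      rw [Fin.le_def]
      simp only [hπval, hej]
      omega
  -- per-player inequality
  have H1 : ∀ i : Fin n,
      ∑ s, D s * u i s ≥ ∑ s, D s * u i (dev s sstar (suffixSet π i)) := by
    intro i
    rw [hsuffix i]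
    have := hprop (e.symm i).val (e.symm i).2
    simp only [List.get_eq_getElem] at this
    have hi : l[((e.symm i) : ℕ)]'(e.symm i).2 = i := e.apply_symm_apply i
    rw [hi] at this
    exact this
  -- sum over players and swap sums
  have Hsum : ∑ s, D s * ∑ i, u i s ≥
      ∑ s, D s * ∑ i, u i (dev s sstar (suffixSet π i)) := by
    rw [ge_iff_le]
    calc ∑ s, D s * ∑ i, u i (dev s sstar (suffixSet π i))
        = ∑ i, ∑ s, D s * u i (dev s sstar (suffixSet π i)) := by
          simp_rw [Finset.mul_sum]; rw [Finset.sum_comm]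
      _ ≤ ∑ i, ∑ s, D s * u i s := Finset.sum_le_sum fun i _ => H1 i
      _ = ∑ s, D s * ∑ i, u i s := by
          simp_rw [Finset.mul_sum]; rw [Finset.sum_comm]
  have Hsmooth : ∑ s, D s * ∑ i, u i (dev s sstar (suffixSet π i)) ≥
      lam * OPT - mu * ∑ s, D s * ∑ i, u i s := by
    have h1 : ∀ s, D s * (lam * OPT - mu * ∑ i, u i s) ≤
        D s * ∑ i, u i (dev s sstar (suffixSet π i)) := fun s =>
      mul_le_mul_of_nonneg_left (hsmooth s π) (hD0 s)
    have := Finset.sum_le_sum (fun s (_ : s ∈ Finset.univ) => h1 s)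
    have heq : ∑ s, D s * (lam * OPT - mu * ∑ i, u i s)
        = lam * OPT * (∑ s, D s) - mu * ∑ s, D s * ∑ i, u i s := by
      simp only [Finset.mul_sum, ← Finset.sum_sub_distrib]
      refine Finset.sum_congr rfl fun s _ => ?_
      rw [mul_sub, Finset.mul_sum]
      ring_nf
    rw [heq, hD1, mul_one] at this
    linarith [this]
  have hfinal : (1 + mu) * (∑ s, D s * ∑ i, u i s) ≥ lam * OPT := by nlinarith [Hsum, Hsmooth]
  rw [ge_iff_le, div_mul_eq_mul_div, div_le_iff₀ (by linarith : (0:ℝ) < 1 + mu)]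
  linarith [hfinal]
end

section
/- Any monotone utility maximization game in which each player's utility is always at least a γ-fraction of his marginal contribution to the social welfare, i.e. u_i(s) ≥ γ·(SW(s) − SW(s_i^out, s_{-i})) for all i and s, is (γ,γ)-coalitionally smooth. -/
open Finset

/-- any monotone utility-maximization game in which every player's
utility is at least a γ-fraction of his marginal contribution to the welfare is
(γ,γ)-coalitionally smooth. -/
theorem marginal_contribution_smooth {n : ℕ} {S : Fin n → Type*}
    (u : ∀ _ : Fin n, (∀ j, S j) → ℝ)
    (hu : ∀ i s, 0 ≤ u i s)
    (gamma : ℝ) (hgamma : 0 ≤ gamma)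
    (sout : ∀ j, S j)
    (hmono : ∀ (i : Fin n) (s : ∀ j, S j),
      ∑ j, u j (Function.update s i (sout i)) ≤ ∑ j, u j s)
    (hmarg : ∀ (i : Fin n) (s : ∀ j, S j),
      u i s ≥ gamma * (∑ j, u j s - ∑ j, u j (Function.update s i (sout i))))
    (sstar : ∀ j, S j)
    (hstar : ∀ s : ∀ j, S j, ∑ i, u i s ≤ ∑ i, u i sstar) :
    ∀ (s : ∀ j, S j) (π : Equiv.Perm (Fin n)),
      ∑ i, u i (dev s sstar (suffixSet π i)) ≥
        gamma * (∑ i, u i sstar) - gamma * (∑ i, u i s) := by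
  intro s π
  -- profile after the first k players (in π-order) have reverted to s
  set P : ℕ → (∀ j, S j) := fun k j => if k ≤ (π j : ℕ) then sstar j else s j with hP
  set G : ℕ → ℝ := fun k => ∑ j, u j (P k) with hG
  have hP0 : P 0 = sstar := by
    funext j; simp [hP]
  have hPn : P n = s := by
    funext j; simp [hP, Nat.not_le.mpr (π j).isLt]
  have hdev : ∀ i, dev s sstar (suffixSet π i) = P (π i) := by
    intro i; funext j
    simp only [dev, suffixSet, Finset.mem_filter, Finset.mem_univ, true_and, hP, Fin.le_def]
  have hupd : ∀ i : Fin n, Function.update (P ((π i : ℕ) + 1)) i (sout i)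
      = Function.update (P (π i)) i (sout i) := by
    intro i; funext j
    rcases eq_or_ne j i with rfl | hne
    · simp
    · have hπ : π j ≠ π i := fun h => hne (π.injective h)
      have hπ' : (π j : ℕ) ≠ (π i : ℕ) := fun h => hπ (Fin.ext h)
      simp only [Function.update_of_ne hne, hP]
      rcases lt_or_ge ((π j : ℕ)) ((π i : ℕ)) with h | h
      · rw [if_neg (by omega), if_neg (by omega)]
      · rw [if_pos (by omega), if_pos h]
  have hPsucc : ∀ i : Fin n, P ((π i : ℕ) + 1) = Function.update (P (π i)) i (s i) := by
    intro i; funext j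
    rcases eq_or_ne j i with rfl | hne
    · simp [hP]
    · have hπ' : (π j : ℕ) ≠ (π i : ℕ) := fun h => hne (π.injective (Fin.ext h))
      simp only [Function.update_of_ne hne, hP]
      rcases lt_or_ge ((π j : ℕ)) ((π i : ℕ)) with h | h
      · rw [if_neg (by omega), if_neg (by omega)]
      · rw [if_pos (by omega), if_pos h]
  have key : ∀ i : Fin n, u i (dev s sstar (suffixSet π i))
      ≥ gamma * (G (π i) - G ((π i : ℕ) + 1)) := by
    intro i
    rw [hdev i]
    have h1 := hmarg i (P (π i))
    have h2 : ∑ j, u j (Function.update (P (π i)) i (sout i)) ≤ G ((π i : ℕ) + 1) := by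
      have := hmono i (P ((π i : ℕ) + 1))
      rwa [hupd i] at this
    have : gamma * (G (π i) - G ((π i : ℕ) + 1))
        ≤ gamma * (G (π i) - ∑ j, u j (Function.update (P (π i)) i (sout i))) := by
      apply mul_le_mul_of_nonneg_left _ hgamma
      linarith
    calc gamma * (G (π i) - G ((π i : ℕ) + 1))
        ≤ gamma * (G (π i) - ∑ j, u j (Function.update (P (π i)) i (sout i))) := this
      _ ≤ u i (P (π i)) := h1
  have hsum : ∑ i, u i (dev s sstar (suffixSet π i))
      ≥ ∑ i : Fin n, gamma * (G (π i) - G ((π i : ℕ) + 1)) :=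
    Finset.sum_le_sum fun i _ => key i
  have hre : ∑ i : Fin n, gamma * (G (π i) - G ((π i : ℕ) + 1))
      = ∑ i : Fin n, gamma * (G (i : ℕ) - G ((i : ℕ) + 1)) :=
    Equiv.sum_comp π (fun k : Fin n => gamma * (G (k : ℕ) - G ((k : ℕ) + 1)))
  have htel : ∑ i : Fin n, gamma * (G (i : ℕ) - G ((i : ℕ) + 1))
      = gamma * (G 0 - G n) := by
    rw [Fin.sum_univ_eq_sum_range (fun k => gamma * (G k - G (k + 1)))]
    rw [← Finset.mul_sum, Finset.sum_range_sub' G n]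
  have : G 0 = ∑ i, u i sstar := by rw [hG]; simp [hP0]
  have hn : G n = ∑ i, u i s := by rw [hG]; simp [hPn]
  calc ∑ i, u i (dev s sstar (suffixSet π i))
      ≥ ∑ i : Fin n, gamma * (G (π i) - G ((π i : ℕ) + 1)) := hsum
    _ = gamma * (G 0 - G n) := by rw [hre, htel]
    _ = gamma * (∑ i, u i sstar) - gamma * (∑ i, u i s) := by
        rw [this, hn]; ring
end

section
/- In any monotone utility maximization game where each player's utility is at least his marginal contribution to the social welfare (u_i(s) ≥ SW(s) − SW(s_i^out, s_{-i}) for all i, s), every strong Nash equilibrium achieves social welfare at least half of the optimum. -/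
open Finset

/-- in any monotone utility game where each player's utility is at least
his marginal contribution to the welfare, every strong Nash equilibrium achieves at
least half of the optimal social welfare. -/
theorem marginal_contribution_spoa {n : ℕ} {S : Fin n → Type*}
    (u : ∀ _ : Fin n, (∀ j, S j) → ℝ)
    (hu : ∀ i s, 0 ≤ u i s)
    (sout : ∀ j, S j)
    (hmono : ∀ (i : Fin n) (s : ∀ j, S j),
      ∑ j, u j (Function.update s i (sout i)) ≤ ∑ j, u j s)
    (hmarg : ∀ (i : Fin n) (s : ∀ j, S j),
      u i s ≥ ∑ j, u j s - ∑ j, u j (Function.update s i (sout i)))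
    (sstar : ∀ j, S j)
    (hstar : ∀ s : ∀ j, S j, ∑ i, u i s ≤ ∑ i, u i sstar)
    (s : ∀ j, S j)
    (hSNE : ∀ C : Finset (Fin n), C.Nonempty → ∀ sC : ∀ j, S j,
      ∃ i ∈ C, u i s ≥ u i (dev s sC C)) :
    ∑ i, u i s ≥ (∑ i, u i sstar) / 2 := by
  have key : ∀ C : Finset (Fin n), ∑ j, u j (dev s sstar C) - ∑ j, u j s ≤ ∑ i ∈ C, u i s := by
    intro C
    induction C using Finset.strongInduction with
    | _ C ih =>
      rcases C.eq_empty_or_nonempty with rfl | hC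
      · have : dev s sstar (∅ : Finset (Fin n)) = s := funext fun j => by simp [dev]
        simp [this]
      · obtain ⟨i, hiC, hi⟩ := hSNE C hC sstar
        have h1 := hmarg i (dev s sstar C)
        have h2 := hmono i (dev s sstar (C.erase i))
        have heq : Function.update (dev s sstar C) i (sout i) =
            Function.update (dev s sstar (C.erase i)) i (sout i) := by
          funext j
          rcases eq_or_ne j i with rfl | hj
          · simp
          · simp [Function.update_of_ne hj, dev, Finset.mem_erase, hj]
        have hIH := ih (C.erase i) (Finset.erase_ssubset hiC)
        have hsum : ∑ j ∈ C, u j s = u i s + ∑ j ∈ C.erase i, u j s :=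
          (Finset.add_sum_erase _ _ hiC).symm
        rw [heq] at h1
        rw [hsum]
        linarith
  have h := key Finset.univ
  have hdev : dev s sstar Finset.univ = sstar := by funext j; simp [dev]
  rw [hdev] at h
  linarith
end

section
/- A utility-maximization exact potential game with only positive externalities whose potential satisfies Φ(s) ≥ λ·SW(s) for all s, and with Φ(s^out) = 0, is (λ,0)-coalitionally smooth. -/
open Finset

/-- a utility-maximization exact potential game with only positive
externalities, opt-out strategies of zero utility, Φ(s^out) = 0, and Φ(s) ≥ λ·SW(s)
is (λ,0)-coalitionally smooth. -/
theorem positive_externalities_smooth_utility {n : ℕ} {S : Fin n → Type*}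
    (u : ∀ _ : Fin n, (∀ j, S j) → ℝ)
    (hu : ∀ i s, 0 ≤ u i s)
    (Φ : (∀ j, S j) → ℝ)
    (hpot : ∀ (i : Fin n) (s : ∀ j, S j) (si : S i),
      u i (Function.update s i si) - u i s = Φ (Function.update s i si) - Φ s)
    (sout : ∀ j, S j)
    (hout : ∀ (i : Fin n) (s : ∀ j, S j), u i (Function.update s i (sout i)) = 0)
    (hΦout : Φ sout = 0)
    (hext : ∀ (s : ∀ j, S j) (i j : Fin n), i ≠ j →
      u i (Function.update s j (sout j)) ≤ u i s)
    (lam : ℝ) (hlam : 0 ≤ lam)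
    (hclose : ∀ s : ∀ j, S j, lam * (∑ i, u i s) ≤ Φ s)
    (sstar : ∀ j, S j)
    (hstar : ∀ s : ∀ j, S j, ∑ i, u i s ≤ ∑ i, u i sstar) :
    ∀ (s : ∀ j, S j) (π : Equiv.Perm (Fin n)),
      ∑ i, u i (dev s sstar (suffixSet π i)) ≥ lam * (∑ i, u i sstar) := by
  classical
  intro s π
  set σ : ℕ → ∀ j, S j := fun k j => if k ≤ (π j : ℕ) then sstar j else sout j with hσ
  -- switching any finite set of coordinates (not containing i) to opt-out can only hurt i
  have ext_many : ∀ (D : Finset (Fin n)) (i : Fin n) (w : ∀ j, S j), i ∉ D →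
      u i (fun j => if j ∈ D then sout j else w j) ≤ u i w := by
    intro D
    induction D using Finset.induction_on with
    | empty => intro i w _; simp
    | @insert a D haD ih =>
      intro i w hi
      have hia : i ≠ a := fun h => hi (h ▸ Finset.mem_insert_self a D)
      have hiD : i ∉ D := fun h => hi (Finset.mem_insert_of_mem h)
      have key : (fun j => if j ∈ insert a D then sout j else w j)
          = Function.update (fun j => if j ∈ D then sout j else w j) a (sout a) := by
        funext j
        rcases eq_or_ne j a with rfl | hja
        · simp
        · rw [Function.update_of_ne hja]
          simp [Finset.mem_insert, hja]
      rw [key]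
      exact le_trans (hext _ i a hia) (ih i w hiD)
  -- pointwise: u i at the coalition deviation dominates u i at σ (π i)
  have hpoint : ∀ i : Fin n, u i (σ ((π i : ℕ))) ≤ u i (dev s sstar (suffixSet π i)) := by
    intro i
    set D : Finset (Fin n) := Finset.univ.filter (fun j => j ∉ suffixSet π i) with hD
    have hiD : i ∉ D := by simp [hD, suffixSet]
    have heq : σ ((π i : ℕ)) =
        fun j => if j ∈ D then sout j else dev s sstar (suffixSet π i) j := by
      funext j
      by_cases h : (π i : ℕ) ≤ (π j : ℕ)
      · have hmem : j ∈ suffixSet π i := Finset.mem_filter.mpr ⟨Finset.mem_univ j, h⟩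
        have hjD : j ∉ D := by simp [hD, hmem]
        show (if (π i : ℕ) ≤ (π j : ℕ) then sstar j else sout j) = _
        rw [if_pos h, if_neg hjD]
        show sstar j = dev s sstar (suffixSet π i) j
        simp [dev, hmem]
      · have hmem : j ∉ suffixSet π i := fun hm => h (Finset.mem_filter.mp hm).2
        have hjD : j ∈ D := by simp [hD, hmem]
        show (if (π i : ℕ) ≤ (π j : ℕ) then sstar j else sout j) = _
        rw [if_neg h, if_pos hjD]
    rw [heq]
    exact ext_many D i _ hiD
  set F : ℕ → ℝ := fun k => Φ (σ k) with hF
  -- each term is a potential difference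
  have hg : ∀ k : Fin n, u (π.symm k) (σ (k : ℕ)) = F (k : ℕ) - F ((k : ℕ) + 1) := by
    intro k
    set i := π.symm k with hi
    have hπi : (π i : ℕ) = (k : ℕ) := by simp [hi]
    have hA : σ (k : ℕ) = Function.update (σ ((k : ℕ) + 1)) i (sstar i) := by
      funext j
      rcases eq_or_ne j i with rfl | hne
      · simp [hσ, hπi]
      · rw [Function.update_of_ne hne]
        have hne' : (π j : ℕ) ≠ (k : ℕ) := by
          intro h
          apply hne
          have : π j = π i := Fin.ext (by rw [h, hπi])
          exact π.injective this
        simp only [hσ]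
        by_cases h : (k : ℕ) + 1 ≤ (π j : ℕ)
        · rw [if_pos (by omega), if_pos h]
        · rw [if_neg (by omega), if_neg h]
    have hB : u i (σ ((k : ℕ) + 1)) = 0 := by
      have hval : σ ((k : ℕ) + 1) i = sout i := by simp [hσ, hπi]
      have h2 : Function.update (σ ((k : ℕ) + 1)) i (sout i) = σ ((k : ℕ) + 1) := by
        rw [← hval]; exact Function.update_eq_self i _
      rw [← h2]; exact hout i _
    have hp := hpot i (σ ((k : ℕ) + 1)) (sstar i)
    rw [← hA, hB, sub_zero] at hp
    exact hp
  -- telescoping the potential differences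
  have tele : ∑ k : Fin n, (F (k : ℕ) - F ((k : ℕ) + 1)) = F 0 - F n := by
    rw [Fin.sum_univ_eq_sum_range (fun k => F k - F (k + 1)) n]
    exact Finset.sum_range_sub' F n
  have hσ0 : σ 0 = sstar := by funext j; simp [hσ]
  have hσn : σ n = sout := by
    funext j
    simp [hσ, Nat.not_le.mpr (π j).isLt]
  have hre : ∑ i : Fin n, u i (σ ((π i : ℕ))) = ∑ k : Fin n, u (π.symm k) (σ (k : ℕ)) := by
    rw [← Equiv.sum_comp π (fun k : Fin n => u (π.symm k) (σ (k : ℕ)))]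
    simp
  have hmain : ∑ i : Fin n, u i (σ ((π i : ℕ))) = Φ sstar := by
    rw [hre]
    calc ∑ k : Fin n, u (π.symm k) (σ (k : ℕ))
        = ∑ k : Fin n, (F (k : ℕ) - F ((k : ℕ) + 1)) := Finset.sum_congr rfl (fun k _ => hg k)
      _ = F 0 - F n := tele
      _ = Φ sstar := by simp [hF, hσ0, hσn, hΦout]
  calc lam * ∑ i, u i sstar ≤ Φ sstar := hclose sstar
    _ = ∑ i : Fin n, u i (σ ((π i : ℕ))) := hmain.symm
    _ ≤ ∑ i, u i (dev s sstar (suffixSet π i)) := Finset.sum_le_sum (fun i _ => hpoint i)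
end

section
/- A cost-minimization exact potential game with only positive externalities, opt-out strategies of zero cost with Φ(s^out) = 0, and potential satisfying Φ(s) ≤ λ·SC(s) for all s, is (λ,0)-coalitionally smooth, i.e. for every profile s and permutation π of players, Σ_i c_i(s*_{N_{π(i)}}, s_{-N_{π(i)}}) ≤ λ·SC(s*), where s* is a socially optimal profile. -/
open Finset

/-- a cost-minimization exact potential game with only positive
externalities, opt-out strategies of zero cost, Φ(s^out) = 0, and Φ(s) ≤ λ·SC(s)
is (λ,0)-coalitionally smooth. -/
theorem positive_externalities_smooth_cost {n : ℕ} {S : Fin n → Type*}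
    (c : ∀ _ : Fin n, (∀ j, S j) → ℝ)
    (hc : ∀ i s, 0 ≤ c i s)
    (Φ : (∀ j, S j) → ℝ)
    (hpot : ∀ (i : Fin n) (s : ∀ j, S j) (si : S i),
      c i (Function.update s i si) - c i s = Φ (Function.update s i si) - Φ s)
    (sout : ∀ j, S j)
    (hout : ∀ (i : Fin n) (s : ∀ j, S j), c i (Function.update s i (sout i)) = 0)
    (hΦout : Φ sout = 0)
    (hext : ∀ (s : ∀ j, S j) (i j : Fin n), i ≠ j →
      c i s ≤ c i (Function.update s j (sout j)))
    (lam : ℝ) (hlam : 0 ≤ lam)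
    (hclose : ∀ s : ∀ j, S j, Φ s ≤ lam * (∑ i, c i s))
    (sstar : ∀ j, S j)
    (hstar : ∀ s : ∀ j, S j, ∑ i, c i sstar ≤ ∑ i, c i s) :
    ∀ (s : ∀ j, S j) (π : Equiv.Perm (Fin n)),
      ∑ i, c i (dev s sstar (suffixSet π i)) ≤ lam * (∑ i, c i sstar) := by
  intro s π
  classical
  set w : ℕ → ∀ j, S j := fun k j => if k ≤ (π j : ℕ) then sstar j else sout j with hw
  have key : ∀ (T : Finset (Fin n)) (i : Fin n), i ∉ T → ∀ u : ∀ j, S j,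
      c i u ≤ c i (fun j => if j ∈ T then sout j else u j) := by
    intro T
    induction T using Finset.induction_on with
    | empty => intro i _ u; simp
    | @insert a T ha ih =>
      intro i hi u
      have hia : i ≠ a := by rintro rfl; exact hi (Finset.mem_insert_self _ _)
      have hiT : i ∉ T := fun h => hi (Finset.mem_insert_of_mem h)
      calc c i u ≤ c i (fun j => if j ∈ T then sout j else u j) := ih i hiT u
        _ ≤ c i (Function.update (fun j => if j ∈ T then sout j else u j) a (sout a)) :=
            hext _ i a hia
        _ = c i (fun j => if j ∈ insert a T then sout j else u j) := by
            congr 1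
            funext j
            by_cases hj : j = a
            · subst hj; simp [Function.update_self, ha]
            · simp [Function.update_of_ne hj, Finset.mem_insert, hj]
  have h1 : ∀ i, c i (dev s sstar (suffixSet π i)) ≤ c i (w (π i)) := by
    intro i
    have hi : i ∉ Finset.univ.filter (fun j => (π j : ℕ) < (π i : ℕ)) := by simp
    have h := key _ i hi (dev s sstar (suffixSet π i))
    have heq : (fun j => if j ∈ Finset.univ.filter (fun j => (π j : ℕ) < (π i : ℕ))
        then sout j else dev s sstar (suffixSet π i) j) = w (π i : ℕ) := by
      funext j
      simp only [hw, dev, suffixSet, Finset.mem_filter, Finset.mem_univ, true_and, Fin.le_def]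
      by_cases hle : (π i : ℕ) ≤ (π j : ℕ)
      · simp [hle, not_lt.mpr hle]
      · simp [hle, lt_of_not_ge hle]
    rwa [heq] at h
  have h2 : ∀ i, c i (w (π i)) = Φ (w (π i)) - Φ (w ((π i : ℕ) + 1)) := by
    intro i
    have hupd : w ((π i : ℕ) + 1) = Function.update (w (π i : ℕ)) i (sout i) := by
      funext j
      by_cases hj : j = i
      · subst hj
        simp [hw, Function.update_self]
      · have hne : (π j : ℕ) ≠ (π i : ℕ) := by
          intro h; exact hj (π.injective (Fin.ext h))
        simp only [hw, Function.update_of_ne hj]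
        by_cases hle : (π i : ℕ) ≤ (π j : ℕ)
        · have : (π i : ℕ) + 1 ≤ (π j : ℕ) := by omega
          simp [hle, this]
        · have : ¬ ((π i : ℕ) + 1 ≤ (π j : ℕ)) := by omega
          simp [hle, this]
    have h0 := hout i (w (π i : ℕ))
    have hp := hpot i (w (π i : ℕ)) (sout i)
    rw [← hupd] at h0 hp
    rw [h0] at hp
    linarith
  have h3 : ∑ i, (Φ (w (π i : ℕ)) - Φ (w ((π i : ℕ) + 1))) = Φ sstar := by
    have e1 : ∑ i, (Φ (w (π i : ℕ)) - Φ (w ((π i : ℕ) + 1)))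
        = ∑ i : Fin n, (Φ (w (i : ℕ)) - Φ (w ((i : ℕ) + 1))) :=
      Equiv.sum_comp π (fun k : Fin n => Φ (w (k : ℕ)) - Φ (w ((k : ℕ) + 1)))
    rw [e1, Fin.sum_univ_eq_sum_range (fun k => Φ (w k) - Φ (w (k + 1))),
      Finset.sum_range_sub' (fun k => Φ (w k))]
    have hw0 : w 0 = sstar := by funext j; simp [hw]
    have hwn : w n = sout := by
      funext j
      have : ¬ (n ≤ (π j : ℕ)) := not_le.mpr (π j).is_lt
      simp [hw, this]
    rw [hw0, hwn, hΦout, sub_zero]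
  calc ∑ i, c i (dev s sstar (suffixSet π i))
      ≤ ∑ i, c i (w (π i : ℕ)) := Finset.sum_le_sum (fun i _ => h1 i)
    _ = ∑ i, (Φ (w (π i : ℕ)) - Φ (w ((π i : ℕ) + 1))) :=
        Finset.sum_congr rfl (fun i _ => h2 i)
    _ = Φ sstar := h3
    _ ≤ lam * (∑ i, c i sstar) := hclose sstar
end

section
/- Fair cost-sharing games with n players are (H_n, 0)-coalitionally smooth: for the socially optimal profile s*, any profile s, and any ordering of the players, Σ_{i=1}^n c_i(s*_{N_i}, s_{-N_i}) ≤ H_n · SC(s*), where H_n = Σ_{k=1}^n 1/k. -/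
open Finset

/-- Number of players using resource `r` under profile `s`. -/
def congestion {n : ℕ} {R : Type*} [Fintype R] [DecidableEq R] (s : Fin n → Finset R) (r : R) : ℕ :=
  (Finset.univ.filter fun i => r ∈ s i).card

/-- Fair-sharing cost of player `i`. -/
noncomputable def shareCost {n : ℕ} {R : Type*} [Fintype R] [DecidableEq R] (c : R → ℝ) (s : Fin n → Finset R)
    (i : Fin n) : ℝ :=
  ∑ r ∈ s i, c r / (congestion s r : ℝ)

lemma harmonic_bound {n : ℕ} (π : Equiv.Perm (Fin n)) (T : Finset (Fin n)) :
    ∑ i ∈ T, (1 : ℝ) / ((T.filter fun j => π i ≤ π j).card) ≤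
      ∑ k ∈ Finset.range n, 1 / ((k : ℝ) + 1) := by
  set m : Fin n → ℕ := fun i => (T.filter fun j => π i ≤ π j).card with hm
  have hmono : ∀ a ∈ T, ∀ b ∈ T, π a < π b → m b < m a := by
    intro a ha b hb hlt
    apply Finset.card_lt_card
    constructor
    · intro j hj
      simp only [mem_filter] at hj ⊢
      exact ⟨hj.1, hlt.le.trans hj.2⟩
    · intro hsub
      have : a ∈ T.filter fun j => π b ≤ π j := hsub (by simp [ha])
      simp only [mem_filter] at this
      exact absurd this.2 (not_le.mpr hlt)
  have hinj : Set.InjOn m T := by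
    intro a ha b hb hab
    by_contra hne
    rcases (π.injective.ne hne).lt_or_gt with h | h
    · exact absurd hab (hmono a ha b hb h).ne'
    · exact absurd hab (hmono b hb a ha h).ne
  have himg : T.image m ⊆ Finset.Icc 1 n := by
    intro k hk
    simp only [mem_image] at hk
    obtain ⟨i, hi, rfl⟩ := hk
    simp only [Finset.mem_Icc]
    constructor
    · exact Finset.card_pos.mpr ⟨i, by simp [hi]⟩
    · exact le_trans (Finset.card_filter_le _ _) (le_trans (Finset.card_le_univ T) (by simp))
  calc ∑ i ∈ T, (1 : ℝ) / (m i) = ∑ k ∈ T.image m, (1 : ℝ) / k := by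
        rw [Finset.sum_image (fun a ha b hb h => hinj ha hb h)]
    _ ≤ ∑ k ∈ Finset.Icc 1 n, (1 : ℝ) / k := by
        apply Finset.sum_le_sum_of_subset_of_nonneg himg
        intro k _ _; positivity
    _ = ∑ k ∈ Finset.range n, 1 / ((k : ℝ) + 1) := by
        rw [show Finset.Icc 1 n = Finset.map ⟨Nat.succ, Nat.succ_injective⟩ (Finset.range n) by
          ext k
          simp only [Finset.mem_Icc, Finset.mem_map, Finset.mem_range,
            Function.Embedding.coeFn_mk]
          constructor
          · rintro ⟨h1, h2⟩; exact ⟨k - 1, by omega, by omega⟩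
          · rintro ⟨a, ha, rfl⟩; omega]
        rw [Finset.sum_map]
        simp [Nat.succ_eq_add_one]

/-- fair cost-sharing games are (H_n, 0)-coalitionally smooth. -/
theorem cost_sharing_Hn_smooth {n : ℕ} {R : Type*} [Fintype R] [DecidableEq R]
    (c : R → ℝ) (hc : ∀ r, 0 ≤ c r)
    (Strat : Fin n → Set (Finset R))
    (sstar : Fin n → Finset R) (hsstarS : ∀ i, sstar i ∈ Strat i)
    (hopt : ∀ t : Fin n → Finset R, (∀ i, t i ∈ Strat i) →
      ∑ i, shareCost c sstar i ≤ ∑ i, shareCost c t i) :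
    ∀ (s : Fin n → Finset R), (∀ i, s i ∈ Strat i) →
      ∀ π : Equiv.Perm (Fin n),
        ∑ i, shareCost c (dev s sstar (suffixSet π i)) i ≤
          (∑ k ∈ Finset.range n, 1 / ((k : ℝ) + 1)) * ∑ i, shareCost c sstar i := by
  intro s _ π
  set H : ℝ := ∑ k ∈ Finset.range n, 1 / ((k : ℝ) + 1) with hH
  have hH0 : 0 ≤ H := by
    rw [hH]; apply Finset.sum_nonneg; intro k _; positivity
  -- T r : players using r under sstar
  set T : R → Finset (Fin n) := fun r => Finset.univ.filter fun i => r ∈ sstar i with hT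
  -- m i r : suffix players using r under sstar
  set m : Fin n → R → ℕ := fun i r => ((T r).filter fun j => π i ≤ π j).card with hm
  -- player i plays sstar i in the deviated profile
  have hdev_self : ∀ i, dev s sstar (suffixSet π i) i = sstar i := by
    intro i; simp [dev, suffixSet]
  -- pointwise bound
  have key : ∀ i, ∀ r ∈ sstar i,
      c r / (congestion (dev s sstar (suffixSet π i)) r : ℝ) ≤ c r / (m i r : ℝ) := by
    intro i r hr
    have hmpos : 0 < m i r := by
      rw [hm]
      apply Finset.card_pos.mpr
      exact ⟨i, by simp [hT, hr]⟩
    have hle : m i r ≤ congestion (dev s sstar (suffixSet π i)) r := by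
      apply Finset.card_le_card
      intro j hj
      simp only [hm, hT, mem_filter, mem_univ, true_and] at hj
      simp only [congestion, mem_filter, mem_univ, true_and, dev, suffixSet]
      rw [if_pos (by simpa using hj.2)]
      exact hj.1
    exact div_le_div_of_nonneg_left (hc r) (by exact_mod_cast hmpos) (by exact_mod_cast hle)
  -- swap sums helper
  have swap : ∀ f : Fin n → R → ℝ,
      ∑ i, ∑ r ∈ sstar i, f i r = ∑ r, ∑ i ∈ T r, f i r := by
    intro f
    rw [Finset.sum_comm' (s := Finset.univ) (t := fun i => sstar i)
      (t' := Finset.univ) (s' := fun r => T r)]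
    intro i r
    simp [hT]
  calc ∑ i, shareCost c (dev s sstar (suffixSet π i)) i
      = ∑ i, ∑ r ∈ sstar i, c r / (congestion (dev s sstar (suffixSet π i)) r : ℝ) := by
        apply Finset.sum_congr rfl
        intro i _
        rw [shareCost, hdev_self]
    _ ≤ ∑ i, ∑ r ∈ sstar i, c r / (m i r : ℝ) := by
        apply Finset.sum_le_sum; intro i _
        exact Finset.sum_le_sum fun r hr => key i r hr
    _ = ∑ r, ∑ i ∈ T r, c r / (m i r : ℝ) := swap _
    _ ≤ ∑ r, H * (if (T r).card = 0 then 0 else c r) := by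
        apply Finset.sum_le_sum
        intro r _
        by_cases hTr : (T r).card = 0
        · rw [Finset.card_eq_zero] at hTr
          simp [hTr, Finset.card_eq_zero.mpr hTr]
        · rw [if_neg hTr]
          have : ∑ i ∈ T r, c r / (m i r : ℝ) = c r * ∑ i ∈ T r, 1 / (m i r : ℝ) := by
            rw [Finset.mul_sum]
            apply Finset.sum_congr rfl
            intro i _; ring
          rw [this, mul_comm H (c r)]
          exact mul_le_mul_of_nonneg_left (harmonic_bound π (T r)) (hc r)
    _ = H * ∑ i, shareCost c sstar i := by
        have : ∑ i, shareCost c sstar i = ∑ r, (if (T r).card = 0 then 0 else c r) := by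
          have h1 : ∀ i : Fin n, shareCost c sstar i
              = ∑ r ∈ sstar i, c r / ((T r).card : ℝ) := by
            intro i
            apply Finset.sum_congr rfl
            intro r _
            congr 2
          rw [Finset.sum_congr rfl (fun i _ => h1 i),
            swap fun i r => c r / ((T r).card : ℝ)]
          apply Finset.sum_congr rfl
          intro r _
          by_cases hTr : (T r).card = 0
          · rw [Finset.card_eq_zero] at hTr
            simp [hTr]
          · rw [if_neg hTr, Finset.sum_const, nsmul_eq_mul]
            field_simp
        rw [this, Finset.mul_sum]
end

section
/- In a fair cost-sharing game with n players, every strong Nash equilibrium has social cost at most H_n times the minimum social cost. -/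
open Finset

noncomputable def Hsum (m : ℕ) : ℝ := ∑ k ∈ Finset.range m, 1 / ((k : ℝ) + 1)

lemma Hsum_nonneg (m : ℕ) : 0 ≤ Hsum m := by
  apply Finset.sum_nonneg
  intro k _
  positivity

lemma Hsum_mono : Monotone Hsum := by
  intro a b hab
  apply Finset.sum_le_sum_of_subset_of_nonneg (Finset.range_subset_range.2 hab)
  intro k _ _
  positivity

/-- in a fair cost-sharing game, every strong Nash equilibrium has
social cost at most H_n times the minimum social cost. -/
theorem cost_sharing_strong_poa {n : ℕ} {R : Type*} [Fintype R] [DecidableEq R]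
    (c : R → ℝ) (hc : ∀ r, 0 ≤ c r)
    (Strat : Fin n → Set (Finset R))
    (sstar : Fin n → Finset R) (hsstarS : ∀ i, sstar i ∈ Strat i)
    (hopt : ∀ t : Fin n → Finset R, (∀ i, t i ∈ Strat i) →
      ∑ i, shareCost c sstar i ≤ ∑ i, shareCost c t i)
    (s : Fin n → Finset R) (hsS : ∀ i, s i ∈ Strat i)
    (hSNE : ∀ C : Finset (Fin n), C.Nonempty →
      ∀ sC : Fin n → Finset R, (∀ i ∈ C, sC i ∈ Strat i) →
      ∃ i ∈ C, shareCost c s i ≤ shareCost c (dev s sC C) i) :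
    ∑ i, shareCost c s i ≤
      (∑ k ∈ Finset.range n, 1 / ((k : ℝ) + 1)) * ∑ i, shareCost c sstar i := by
  classical
  -- `m C r` : number of players in `C` using `r` under the optimal profile
  have key : ∀ C : Finset (Fin n), ∑ i ∈ C, shareCost c s i ≤
      ∑ r : R, c r * Hsum ((C.filter fun j => r ∈ sstar j).card) := by
    intro C
    induction C using Finset.strongInduction with
    | _ C ih =>
      rcases C.eq_empty_or_nonempty with rfl | hne
      · simp [Hsum]
      · obtain ⟨i, hiC, hile⟩ := hSNE C hne sstar (fun i _ => hsstarS i)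
        -- bound the deviation cost of player i
        have hdev : shareCost c (dev s sstar C) i ≤
            ∑ r ∈ sstar i, c r / (((C.filter fun j => r ∈ sstar j).card : ℝ)) := by
          have hdevi : (dev s sstar C) i = sstar i := by simp [dev, hiC]
          unfold shareCost
          rw [hdevi]
          apply Finset.sum_le_sum
          intro r hr
          have hpos : 0 < (C.filter fun j => r ∈ sstar j).card :=
            Finset.card_pos.2 ⟨i, Finset.mem_filter.2 ⟨hiC, hr⟩⟩
          have hle : (C.filter fun j => r ∈ sstar j).card ≤ congestion (dev s sstar C) r := by
            apply Finset.card_le_card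
            intro j hj
            rw [Finset.mem_filter] at hj
            exact Finset.mem_filter.2 ⟨Finset.mem_univ _, by simp [dev, hj.1, hj.2]⟩
          exact div_le_div_of_nonneg_left (hc r) (by exact_mod_cast hpos) (by exact_mod_cast hle)
        have hC' := ih (C.erase i) (Finset.erase_ssubset hiC)
        have hsplit : ∑ j ∈ C, shareCost c s j =
            shareCost c s i + ∑ j ∈ C.erase i, shareCost c s j :=
          (Finset.add_sum_erase _ _ hiC).symm
        rw [hsplit]
        have hstep : (∑ r ∈ sstar i, c r / (((C.filter fun j => r ∈ sstar j).card : ℝ))) +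
            ∑ r : R, c r * Hsum (((C.erase i).filter fun j => r ∈ sstar j).card) =
            ∑ r : R, c r * Hsum ((C.filter fun j => r ∈ sstar j).card) := by
          have h1 : (∑ r ∈ sstar i, c r / (((C.filter fun j => r ∈ sstar j).card : ℝ))) =
              ∑ r : R, if r ∈ sstar i then c r / (((C.filter fun j => r ∈ sstar j).card : ℝ)) else 0 := by
            rw [Finset.sum_ite_mem, Finset.univ_inter]
          rw [h1, ← Finset.sum_add_distrib]
          apply Finset.sum_congr rfl
          intro r _
          have hfe : ((C.erase i).filter fun j => r ∈ sstar j) =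
              (C.filter fun j => r ∈ sstar j).erase i := Finset.filter_erase _ _ _
          by_cases hri : r ∈ sstar i
          · have hmem : i ∈ C.filter fun j => r ∈ sstar j := Finset.mem_filter.2 ⟨hiC, hri⟩
            have hcard : ((C.erase i).filter fun j => r ∈ sstar j).card + 1 =
                (C.filter fun j => r ∈ sstar j).card := by
              rw [hfe, Finset.card_erase_of_mem hmem]
              exact Nat.succ_pred_eq_of_pos (Finset.card_pos.2 ⟨i, hmem⟩)
            set k := ((C.erase i).filter fun j => r ∈ sstar j).card
            rw [if_pos hri, ← hcard]
            have : Hsum (k + 1) = Hsum k + 1 / ((k : ℝ) + 1) := Finset.sum_range_succ _ _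
            rw [this]
            push_cast
            ring
          · have : i ∉ C.filter fun j => r ∈ sstar j := by
              simp [Finset.mem_filter, hri]
            rw [hfe, Finset.erase_eq_of_notMem this, if_neg hri, zero_add]
        calc shareCost c s i + ∑ j ∈ C.erase i, shareCost c s j
            ≤ (∑ r ∈ sstar i, c r / (((C.filter fun j => r ∈ sstar j).card : ℝ))) +
              ∑ r : R, c r * Hsum (((C.erase i).filter fun j => r ∈ sstar j).card) :=
              add_le_add (hile.trans hdev) hC'
          _ = _ := hstep
  -- the optimal social cost equals the total cost of used resources
  have hopt_eq : ∑ i, shareCost c sstar i =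
      ∑ r : R, (if (Finset.univ.filter fun j => r ∈ sstar j).card = 0 then 0 else c r) := by
    unfold shareCost
    have h1 : ∀ i : Fin n, (∑ r ∈ sstar i, c r / (congestion sstar r : ℝ)) =
        ∑ r : R, if r ∈ sstar i then c r / (congestion sstar r : ℝ) else 0 := by
      intro i
      rw [Finset.sum_ite_mem, Finset.univ_inter]
    simp_rw [h1]
    rw [Finset.sum_comm]
    apply Finset.sum_congr rfl
    intro r _
    rw [Finset.sum_ite, Finset.sum_const_zero, add_zero, Finset.sum_const, nsmul_eq_mul]
    unfold congestion
    by_cases h0 : (Finset.univ.filter fun j => r ∈ sstar j).card = 0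
    · simp [h0]
    · rw [if_neg h0]
      have : ((Finset.univ.filter fun j => r ∈ sstar j).card : ℝ) ≠ 0 := by
        exact_mod_cast h0
      field_simp
  calc ∑ i, shareCost c s i = ∑ i ∈ Finset.univ, shareCost c s i := rfl
    _ ≤ ∑ r : R, c r * Hsum ((Finset.univ.filter fun j => r ∈ sstar j).card) := key Finset.univ
    _ ≤ ∑ r : R, Hsum n * (if (Finset.univ.filter fun j => r ∈ sstar j).card = 0 then 0 else c r) := by
        apply Finset.sum_le_sum
        intro r _
        by_cases h0 : (Finset.univ.filter fun j => r ∈ sstar j).card = 0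
        · simp [h0, Hsum]
        · rw [if_neg h0, mul_comm]
          apply mul_le_mul_of_nonneg_right _ (hc r)
          apply Hsum_mono
          calc (Finset.univ.filter fun j => r ∈ sstar j).card
              ≤ (Finset.univ : Finset (Fin n)).card := Finset.card_filter_le _ _
            _ = n := Finset.card_univ.trans (Fintype.card_fin n)
    _ = Hsum n * ∑ r : R, (if (Finset.univ.filter fun j => r ∈ sstar j).card = 0 then 0 else c r) :=
        (Finset.mul_sum _ _ _).symm
    _ = (∑ k ∈ Finset.range n, 1 / ((k : ℝ) + 1)) * ∑ i, shareCost c sstar i := by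
        rw [hopt_eq]; rfl
end

section
/- If a utility maximization game with nonnegative utilities is (λ,μ)-coalitionally smooth, then for the coalitional best-response Markov chain, for any current profile s, the expected social welfare after one step satisfies E[SW(s^t) | s^{t−1} = s] ≥ (1/H_n)·(λ·OPT − μ·SW(s)). Consequently, any stationary distribution D of the chain satisfies E_{s∼D}[SW(s)] ≥ (1/H_n)·(λ/(1+μ))·OPT. -/
open Finset

namespace CSE
variable {n : ℕ}

lemma mem_suffixSet_self (π : Equiv.Perm (Fin n)) (i : Fin n) : i ∈ suffixSet π i := by
  simp [suffixSet]

lemma suffixSet_trans (ρ π : Equiv.Perm (Fin n)) (i : Fin n) :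
    suffixSet (ρ.symm.trans π) (ρ i) = (suffixSet π i).image ρ := by
  ext j
  simp only [suffixSet, Finset.mem_image, Finset.mem_filter, Finset.mem_univ, true_and,
    Equiv.trans_apply, Equiv.symm_apply_apply]
  constructor
  · intro h; exact ⟨ρ.symm j, h, by simp⟩
  · rintro ⟨a, ha, rfl⟩; simpa using ha

lemma card_suffixSet (π : Equiv.Perm (Fin n)) (i : Fin n) :
    (suffixSet π i).card = n - (π i : ℕ) := by
  have h1 : (suffixSet π i).image π = Finset.Ici (π i) := by
    ext v
    simp only [suffixSet, Finset.mem_image, Finset.mem_filter, Finset.mem_univ, true_and,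
      Finset.mem_Ici]
    constructor
    · rintro ⟨a, ha, rfl⟩; exact ha
    · intro hv; exact ⟨π.symm v, by simpa using hv, by simp⟩
  have h2 := Finset.card_image_of_injective (suffixSet π i) π.injective
  rw [h1, Fin.card_Ici] at h2
  omega

lemma fib_card_symm {C C' : Finset (Fin n)} {i i' : Fin n}
    (hi : i ∈ C) (hi' : i' ∈ C') (hcc : C.card = C'.card) :
    ((univ : Finset (Equiv.Perm (Fin n))).filter (fun π => suffixSet π i = C)).card
      = ((univ : Finset (Equiv.Perm (Fin n))).filter (fun π => suffixSet π i' = C')).card := by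
  classical
  have hcard : Fintype.card {x // x ∈ C} = Fintype.card {x // x ∈ C'} := by
    simpa [Fintype.card_coe] using hcc
  have hcardc : Fintype.card {x // ¬ x ∈ C} = Fintype.card {x // ¬ x ∈ C'} := by
    rw [Fintype.card_subtype_compl, Fintype.card_subtype_compl, hcard]
  let e0 : {x // x ∈ C} ≃ {x // x ∈ C'} := Fintype.equivOfCardEq hcard
  let e : {x // x ∈ C} ≃ {x // x ∈ C'} := e0.trans (Equiv.swap (e0 ⟨i, hi⟩) ⟨i', hi'⟩)
  let f : {x // ¬ x ∈ C} ≃ {x // ¬ x ∈ C'} := Fintype.equivOfCardEq hcardc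
  let ρ : Equiv.Perm (Fin n) :=
    ((Equiv.sumCompl (· ∈ C)).symm.trans ((e.sumCongr f).trans (Equiv.sumCompl (· ∈ C'))))
  have hρmem : ∀ x (hx : x ∈ C), ρ x = (e ⟨x, hx⟩ : Fin n) := by
    intro x hx
    simp only [ρ, Equiv.trans_apply, Equiv.sumCompl_symm_apply_of_pos hx,
      Equiv.sumCongr_apply, Sum.map_inl, Equiv.sumCompl_apply_inl]
  have hρi : ρ i = i' := by
    rw [hρmem i hi]
    simp [e, Equiv.swap_apply_left]
  have himg : C.image ρ = C' := by
    apply Finset.eq_of_subset_of_card_le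
    · intro y hy
      obtain ⟨x, hx, rfl⟩ := Finset.mem_image.mp hy
      rw [hρmem x hx]; exact (e ⟨x, hx⟩).2
    · rw [Finset.card_image_of_injective _ ρ.injective, hcc]
  have key : ∀ (σ : Equiv.Perm (Fin n)) (ρ : Equiv.Perm (Fin n)) (i i' : Fin n)
      (C C' : Finset (Fin n)), ρ i = i' → C.image ρ = C' → suffixSet σ i = C →
      suffixSet (ρ.symm.trans σ) i' = C' := by
    intro σ ρ i i' C C' h1 h2 h3
    rw [← h1, suffixSet_trans, h3, h2]
  apply Finset.card_bij' (i := fun π _ => ρ.symm.trans π) (j := fun σ _ => ρ.trans σ)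
  · intro π hπ
    simp only [Finset.mem_filter, Finset.mem_univ, true_and] at hπ ⊢
    exact key π ρ i i' C C' hρi himg hπ
  · intro σ hσ
    simp only [Finset.mem_filter, Finset.mem_univ, true_and] at hσ ⊢
    have h2 : C'.image ρ.symm = C := by
      rw [← himg, Finset.image_image]
      simpa using Finset.image_id (s := C)
    have := key σ ρ.symm i' i C' C (by rw [← hρi]; simp) h2 hσ
    simpa using this
  · intro π _; ext x; simp
  · intro σ _; ext x; simp

lemma total_count {k : ℕ} (hk1 : 1 ≤ k) (hkn : k ≤ n) :
    ∑ i : Fin n, ∑ C ∈ (univ : Finset (Finset (Fin n))).filter (fun C => C.card = k),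
      ((univ : Finset (Equiv.Perm (Fin n))).filter (fun π => suffixSet π i = C)).card
    = n.factorial := by
  classical
  have hn : 0 < n := lt_of_lt_of_le hk1 hkn
  have step1 : ∀ i : Fin n,
      ∑ C ∈ (univ : Finset (Finset (Fin n))).filter (fun C => C.card = k),
        ((univ : Finset (Equiv.Perm (Fin n))).filter (fun π => suffixSet π i = C)).card
      = ((univ : Finset (Equiv.Perm (Fin n))).filter
          (fun π => (suffixSet π i).card = k)).card := by
    intro i
    rw [Finset.card_eq_sum_card_fiberwise
      (f := fun π => suffixSet π i)
      (t := (univ : Finset (Finset (Fin n))).filter (fun C => C.card = k))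
      (by intro π hπ
          simp only [Finset.mem_coe, Finset.mem_filter, Finset.mem_univ, true_and] at hπ ⊢
          exact hπ)]
    apply Finset.sum_congr rfl
    intro C hC
    simp only [Finset.mem_filter, Finset.mem_univ, true_and] at hC
    congr 1
    rw [Finset.filter_filter]
    apply Finset.filter_congr
    intro π _
    constructor
    · intro h; exact ⟨by rw [h, hC], h⟩
    · intro h; exact h.2
  have step2 : ∀ i : Fin n,
      ((univ : Finset (Equiv.Perm (Fin n))).filter (fun π => (suffixSet π i).card = k)).card
      = ((univ : Finset (Equiv.Perm (Fin n))).filter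
          (fun π => π i = (⟨n - k, by omega⟩ : Fin n))).card := by
    intro i
    congr 1
    apply Finset.filter_congr
    intro π _
    rw [card_suffixSet]
    have := (π i).isLt
    constructor
    · intro h; exact Fin.ext (by simp; omega)
    · intro h; have : (π i : ℕ) = n - k := by rw [h]
      omega
  calc ∑ i : Fin n, ∑ C ∈ (univ : Finset (Finset (Fin n))).filter (fun C => C.card = k),
        ((univ : Finset (Equiv.Perm (Fin n))).filter (fun π => suffixSet π i = C)).card
      = ∑ i : Fin n, ((univ : Finset (Equiv.Perm (Fin n))).filter
          (fun π => π i = (⟨n - k, by omega⟩ : Fin n))).card := by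
        refine Finset.sum_congr rfl fun i _ => ?_
        rw [step1 i, step2 i]
    _ = ∑ i : Fin n, ∑ π : Equiv.Perm (Fin n),
          (if π i = (⟨n - k, by omega⟩ : Fin n) then 1 else 0) := by
        refine Finset.sum_congr rfl fun i _ => ?_
        rw [Finset.card_filter]
    _ = ∑ π : Equiv.Perm (Fin n), ∑ i : Fin n,
          (if π i = (⟨n - k, by omega⟩ : Fin n) then 1 else 0) := Finset.sum_comm
    _ = ∑ π : Equiv.Perm (Fin n), 1 := by
        refine Finset.sum_congr rfl fun π _ => ?_
        rw [← Finset.card_filter]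
        have : (univ : Finset (Fin n)).filter (fun i => π i = (⟨n - k, by omega⟩ : Fin n))
            = {π.symm ⟨n - k, by omega⟩} := by
          ext x
          simp [Equiv.apply_eq_iff_eq_symm_apply]
        rw [this, Finset.card_singleton]
    _ = n.factorial := by
        rw [Finset.sum_const, smul_eq_mul, mul_one, Finset.card_univ, Fintype.card_perm,
          Fintype.card_fin]

lemma fib_empty {C : Finset (Fin n)} {i : Fin n} (hi : i ∉ C) :
    ((univ : Finset (Equiv.Perm (Fin n))).filter (fun π => suffixSet π i = C)) = ∅ := by
  rw [Finset.filter_eq_empty_iff]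
  intro π _ h
  exact hi (h ▸ mem_suffixSet_self π i)

lemma card_filter_card_eq (k : ℕ) :
    ((univ : Finset (Finset (Fin n))).filter (fun C => C.card = k)).card = n.choose k := by
  rw [← Finset.powerset_univ, ← Finset.powersetCard_eq_filter, Finset.card_powersetCard,
    Finset.card_univ, Fintype.card_fin]

lemma fib_card_val_nat {k : ℕ} (hk1 : 1 ≤ k) (hkn : k ≤ n) {C : Finset (Fin n)} {i : Fin n}
    (hC : C.card = k) (hi : i ∈ C) :
    ((univ : Finset (Equiv.Perm (Fin n))).filter (fun π => suffixSet π i = C)).card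
      * (k * n.choose k) = n.factorial := by
  classical
  set N := ((univ : Finset (Equiv.Perm (Fin n))).filter (fun π => suffixSet π i = C)).card with hN
  have := total_count (n := n) hk1 hkn
  rw [Finset.sum_comm] at this
  have heval : ∀ C' ∈ (univ : Finset (Finset (Fin n))).filter (fun C => C.card = k),
      ∑ i' : Fin n, ((univ : Finset (Equiv.Perm (Fin n))).filter
        (fun π => suffixSet π i' = C')).card = k * N := by
    intro C' hC'
    simp only [Finset.mem_filter, Finset.mem_univ, true_and] at hC'
    have : ∑ i' : Fin n, ((univ : Finset (Equiv.Perm (Fin n))).filter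
        (fun π => suffixSet π i' = C')).card
        = ∑ i' ∈ C', ((univ : Finset (Equiv.Perm (Fin n))).filter
        (fun π => suffixSet π i' = C')).card := by
      symm
      apply Finset.sum_subset (Finset.subset_univ C')
      intro x _ hx
      rw [fib_empty hx, Finset.card_empty]
    rw [this]
    have : ∀ i' ∈ C', ((univ : Finset (Equiv.Perm (Fin n))).filter
        (fun π => suffixSet π i' = C')).card = N := by
      intro i' hi'
      rw [hN]
      exact (fib_card_symm hi hi' (by rw [hC, hC'])).symm
    rw [Finset.sum_congr rfl this, Finset.sum_const, smul_eq_mul, hC']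
  rw [Finset.sum_congr rfl heval, Finset.sum_const, smul_eq_mul, card_filter_card_eq] at this
  rw [← this]; ring

lemma fib_card_val_real {k : ℕ} (hk1 : 1 ≤ k) (hkn : k ≤ n) {C : Finset (Fin n)} {i : Fin n}
    (hC : C.card = k) (hi : i ∈ C) :
    (((univ : Finset (Equiv.Perm (Fin n))).filter (fun π => suffixSet π i = C)).card : ℝ)
      = (n.factorial : ℝ) * ((1 / (k : ℝ)) * (1 / (n.choose k : ℝ))) := by
  have h := fib_card_val_nat hk1 hkn hC hi
  have hk : (k : ℝ) ≠ 0 := by positivity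
  have hch : ((n.choose k : ℕ) : ℝ) ≠ 0 := by
    have := Nat.choose_pos hkn
    positivity
  have := congrArg (fun m : ℕ => (m : ℝ)) h
  push_cast at this
  field_simp
  linarith [this]

lemma key_avg (F : Fin n → Finset (Fin n) → ℝ) (W : ℝ)
    (hF : ∀ π : Equiv.Perm (Fin n), ∑ i, F i (suffixSet π i) ≥ W) :
    ∑ k ∈ Finset.Icc 1 n, (1 / (k : ℝ)) * (1 / (n.choose k : ℝ)) *
      ∑ C ∈ (univ : Finset (Finset (Fin n))).filter (fun C => C.card = k),
        ∑ i ∈ C, F i C ≥ W := by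
  classical
  have hfac : (0 : ℝ) < (n.factorial : ℝ) := by positivity
  have h1 : ∑ π : Equiv.Perm (Fin n), ∑ i, F i (suffixSet π i) ≥ (n.factorial : ℝ) * W := by
    calc ∑ π : Equiv.Perm (Fin n), ∑ i, F i (suffixSet π i)
        ≥ ∑ _π : Equiv.Perm (Fin n), W := Finset.sum_le_sum (fun π _ => hF π)
      _ = (n.factorial : ℝ) * W := by
          rw [Finset.sum_const, Finset.card_univ, Fintype.card_perm, Fintype.card_fin,
            nsmul_eq_mul]
  have h2 : ∑ π : Equiv.Perm (Fin n), ∑ i, F i (suffixSet π i)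
      = (n.factorial : ℝ) * ∑ k ∈ Finset.Icc 1 n, (1 / (k : ℝ)) * (1 / (n.choose k : ℝ)) *
          ∑ C ∈ (univ : Finset (Finset (Fin n))).filter (fun C => C.card = k),
            ∑ i ∈ C, F i C := by
    rw [Finset.sum_comm]
    have hfib : ∀ i : Fin n, ∑ π : Equiv.Perm (Fin n), F i (suffixSet π i)
        = ∑ C ∈ (univ : Finset (Finset (Fin n))),
            (((univ : Finset (Equiv.Perm (Fin n))).filter
              (fun π => suffixSet π i = C)).card : ℝ) * F i C := by
      intro i
      rw [← Finset.sum_fiberwise_of_maps_to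
        (g := fun π : Equiv.Perm (Fin n) => suffixSet π i)
        (t := (univ : Finset (Finset (Fin n)))) (fun π _ => Finset.mem_univ _)]
      refine Finset.sum_congr rfl fun C _ => ?_
      have : ∀ π ∈ (univ : Finset (Equiv.Perm (Fin n))).filter (fun π => suffixSet π i = C),
          F i (suffixSet π i) = F i C := by
        intro π hπ
        simp only [Finset.mem_filter] at hπ
        rw [hπ.2]
      rw [Finset.sum_congr rfl this, Finset.sum_const, nsmul_eq_mul]
    calc ∑ i, ∑ π : Equiv.Perm (Fin n), F i (suffixSet π i)
        = ∑ i, ∑ C ∈ (univ : Finset (Finset (Fin n))),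
            (((univ : Finset (Equiv.Perm (Fin n))).filter
              (fun π => suffixSet π i = C)).card : ℝ) * F i C :=
          Finset.sum_congr rfl fun i _ => hfib i
      _ = ∑ C ∈ (univ : Finset (Finset (Fin n))), ∑ i,
            (((univ : Finset (Equiv.Perm (Fin n))).filter
              (fun π => suffixSet π i = C)).card : ℝ) * F i C := Finset.sum_comm
      _ = ∑ k ∈ Finset.range (n + 1),
            ∑ C ∈ (univ : Finset (Finset (Fin n))).filter (fun C => C.card = k), ∑ i,
            (((univ : Finset (Equiv.Perm (Fin n))).filter
              (fun π => suffixSet π i = C)).card : ℝ) * F i C := by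
          rw [Finset.sum_fiberwise_of_maps_to
            (g := fun C : Finset (Fin n) => C.card) (t := Finset.range (n + 1))
            (fun C _ => by
              simp only [Finset.mem_range]
              have := Finset.card_le_univ C
              rw [Fintype.card_fin] at this
              omega)]
      _ = ∑ k ∈ Finset.Icc 1 n,
            ∑ C ∈ (univ : Finset (Finset (Fin n))).filter (fun C => C.card = k), ∑ i,
            (((univ : Finset (Equiv.Perm (Fin n))).filter
              (fun π => suffixSet π i = C)).card : ℝ) * F i C := by
          have hins : Finset.range (n + 1) = insert 0 (Finset.Icc 1 n) := by
            ext x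
            simp only [Finset.mem_range, Finset.mem_insert, Finset.mem_Icc]
            omega
          rw [hins, Finset.sum_insert (by simp)]
          have h0 : ∑ C ∈ (univ : Finset (Finset (Fin n))).filter (fun C => C.card = 0), ∑ i,
              (((univ : Finset (Equiv.Perm (Fin n))).filter
                (fun π => suffixSet π i = C)).card : ℝ) * F i C = 0 := by
            apply Finset.sum_eq_zero
            intro C hC
            simp only [Finset.mem_filter, Finset.card_eq_zero] at hC
            apply Finset.sum_eq_zero
            intro i _
            rw [fib_empty (by simp [hC.2]), Finset.card_empty]
            simp
          rw [h0, zero_add]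
      _ = ∑ k ∈ Finset.Icc 1 n, (n.factorial : ℝ) *
            ((1 / (k : ℝ)) * (1 / (n.choose k : ℝ)) *
              ∑ C ∈ (univ : Finset (Finset (Fin n))).filter (fun C => C.card = k),
                ∑ i ∈ C, F i C) := by
          refine Finset.sum_congr rfl fun k hk => ?_
          simp only [Finset.mem_Icc] at hk
          rw [Finset.mul_sum, Finset.mul_sum]
          refine Finset.sum_congr rfl fun C hC => ?_
          simp only [Finset.mem_filter, Finset.mem_univ, true_and] at hC
          have hsub : ∑ i, (((univ : Finset (Equiv.Perm (Fin n))).filter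
              (fun π => suffixSet π i = C)).card : ℝ) * F i C
              = ∑ i ∈ C, (((univ : Finset (Equiv.Perm (Fin n))).filter
              (fun π => suffixSet π i = C)).card : ℝ) * F i C := by
            symm
            apply Finset.sum_subset (Finset.subset_univ C)
            intro x _ hx
            rw [fib_empty hx, Finset.card_empty]
            simp
          rw [hsub, Finset.mul_sum, Finset.mul_sum]
          refine Finset.sum_congr rfl fun i hi => ?_
          rw [fib_card_val_real hk.1 hk.2 hC hi]
          ring
      _ = (n.factorial : ℝ) * ∑ k ∈ Finset.Icc 1 n, (1 / (k : ℝ)) * (1 / (n.choose k : ℝ)) *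
            ∑ C ∈ (univ : Finset (Finset (Fin n))).filter (fun C => C.card = k),
              ∑ i ∈ C, F i C := by rw [Finset.mul_sum]
  rw [h2] at h1
  exact le_of_mul_le_mul_left h1 hfac

end CSE

/-- for a (λ,μ)-coalitionally smooth utility game, one step of the
coalitional best-response Markov chain from any profile `s` has expected welfare at
least (1/H_n)(λ·OPT − μ·SW(s)); hence every stationary distribution (coalitional sink
equilibrium) has expected welfare at least (1/H_n)(λ/(1+μ))·OPT. -/
theorem coalitional_sink_equilibrium_welfare {n : ℕ} {S : Fin n → Type*}
    [∀ j, Fintype (S j)] [∀ j, DecidableEq (S j)]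
    (u : ∀ _ : Fin n, (∀ j, S j) → ℝ)
    (hu : ∀ i s, 0 ≤ u i s)
    (lam mu OPT : ℝ) (hlam : 0 ≤ lam) (hmu : 0 ≤ mu)
    (hOPT_ub : ∀ s : ∀ j, S j, ∑ i, u i s ≤ OPT)
    (hOPT_ach : ∃ s : ∀ j, S j, ∑ i, u i s = OPT)
    (sstar : ∀ j, S j)
    (hsmooth : ∀ (s : ∀ j, S j) (π : Equiv.Perm (Fin n)),
      ∑ i, u i (dev s sstar (suffixSet π i)) ≥ lam * OPT - mu * ∑ i, u i s)
    -- coalitional best responses: `br C s` agrees with `s` outside `C` and maximizes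
    -- the total utility of the coalition `C`
    (br : Finset (Fin n) → (∀ j, S j) → (∀ j, S j))
    (hbr_fix : ∀ (C : Finset (Fin n)) (s : ∀ j, S j) (i : Fin n), i ∉ C → br C s i = s i)
    (hbr_opt : ∀ (C : Finset (Fin n)) (s t : ∀ j, S j),
      ∑ i ∈ C, u i (dev s t C) ≤ ∑ i ∈ C, u i (br C s))
    (Hn : ℝ) (hHn : Hn = ∑ k ∈ Finset.range n, 1 / ((k : ℝ) + 1))
    -- a stationary distribution of the coalitional best-response Markov chain
    (D : (∀ j, S j) → ℝ) (hD0 : ∀ s, 0 ≤ D s) (hD1 : ∑ s, D s = 1)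
    (hstat : ∀ t : ∀ j, S j, D t = ∑ s, D s *
      ((1 / Hn) * ∑ k ∈ Finset.Icc 1 n, (1 / (k : ℝ)) * (1 / (n.choose k : ℝ)) *
        ((Finset.univ.filter fun C : Finset (Fin n) => C.card = k ∧ br C s = t).card : ℝ))) :
    (∀ s : ∀ j, S j,
      (1 / Hn) * ∑ k ∈ Finset.Icc 1 n, (1 / (k : ℝ)) * (1 / (n.choose k : ℝ)) *
        ∑ C ∈ Finset.univ.filter (fun C : Finset (Fin n) => C.card = k),
          ∑ i, u i (br C s)
      ≥ (1 / Hn) * (lam * OPT - mu * ∑ i, u i s)) ∧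
    ∑ s, D s * ∑ i, u i s ≥ (1 / Hn) * (lam / (1 + mu)) * OPT := by
  classical
  have hHn0 : 0 ≤ Hn := by
    rw [hHn]; exact Finset.sum_nonneg fun k _ => by positivity
  -- Part 1
  have part1 : ∀ s : ∀ j, S j,
      (1 / Hn) * ∑ k ∈ Finset.Icc 1 n, (1 / (k : ℝ)) * (1 / (n.choose k : ℝ)) *
        ∑ C ∈ Finset.univ.filter (fun C : Finset (Fin n) => C.card = k),
          ∑ i, u i (br C s)
      ≥ (1 / Hn) * (lam * OPT - mu * ∑ i, u i s) := by
    intro s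
    have hkey := CSE.key_avg (fun i C => u i (dev s sstar C))
      (lam * OPT - mu * ∑ i, u i s) (fun π => hsmooth s π)
    have hmono : ∑ k ∈ Finset.Icc 1 n, (1 / (k : ℝ)) * (1 / (n.choose k : ℝ)) *
        ∑ C ∈ Finset.univ.filter (fun C : Finset (Fin n) => C.card = k),
          ∑ i ∈ C, u i (dev s sstar C)
        ≤ ∑ k ∈ Finset.Icc 1 n, (1 / (k : ℝ)) * (1 / (n.choose k : ℝ)) *
        ∑ C ∈ Finset.univ.filter (fun C : Finset (Fin n) => C.card = k),
          ∑ i, u i (br C s) := by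
      apply Finset.sum_le_sum
      intro k _
      apply mul_le_mul_of_nonneg_left _ (by positivity)
      apply Finset.sum_le_sum
      intro C _
      calc ∑ i ∈ C, u i (dev s sstar C) ≤ ∑ i ∈ C, u i (br C s) := hbr_opt C s sstar
        _ ≤ ∑ i, u i (br C s) :=
          Finset.sum_le_sum_of_subset_of_nonneg (Finset.subset_univ C)
            (fun i _ _ => hu i (br C s))
    exact mul_le_mul_of_nonneg_left (le_trans hkey hmono) (by positivity)
  refine ⟨part1, ?_⟩
  -- Part 2
  by_cases hn : n = 0
  · -- degenerate: the stationarity equation is contradictory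
    subst hn
    have hH0 : Hn = 0 := by rw [hHn]; simp
    have hD : ∀ t, D t = 0 := by
      intro t
      rw [hstat t]
      apply Finset.sum_eq_zero
      intro s _
      rw [hH0]
      simp
    rw [Finset.sum_congr rfl (fun s _ => hD s)] at hD1
    simp at hD1
  · have hn1 : 1 ≤ n := Nat.one_le_iff_ne_zero.mpr hn
    have hHn1 : 1 ≤ Hn := by
      rw [hHn]
      calc (1 : ℝ) = 1 / ((0 : ℕ) + 1) := by norm_num
        _ ≤ ∑ k ∈ Finset.range n, 1 / ((k : ℝ) + 1) := by
          apply Finset.single_le_sum (f := fun k : ℕ => 1 / ((k : ℝ) + 1))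
          · intro k _; positivity
          · simpa using Nat.pos_of_ne_zero hn
    have hHnpos : (0 : ℝ) < Hn := lt_of_lt_of_le one_pos hHn1
    set E := ∑ s, D s * ∑ i, u i s with hE
    have hE0 : 0 ≤ E := by
      apply Finset.sum_nonneg
      intro s _
      exact mul_nonneg (hD0 s) (Finset.sum_nonneg fun i _ => hu i s)
    -- rewrite E via stationarity
    have hstep : ∀ s : ∀ j, S j, ∀ k ∈ Finset.Icc 1 n,
        ∑ t : ∀ j, S j,
          ((Finset.univ.filter fun C : Finset (Fin n) => C.card = k ∧ br C s = t).card : ℝ)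
            * ∑ i, u i t
        = ∑ C ∈ Finset.univ.filter (fun C : Finset (Fin n) => C.card = k),
            ∑ i, u i (br C s) := by
      intro s k _
      rw [← Finset.sum_fiberwise_of_maps_to
        (g := fun C : Finset (Fin n) => br C s)
        (t := (univ : Finset (∀ j, S j))) (fun C _ => Finset.mem_univ _)]
      refine Finset.sum_congr rfl fun t _ => ?_
      rw [Finset.filter_filter]
      have : ∀ C ∈ Finset.univ.filter (fun C : Finset (Fin n) => C.card = k ∧ br C s = t),
          ∑ i, u i (br C s) = ∑ i, u i t := by
        intro C hC
        simp only [Finset.mem_filter] at hC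
        rw [hC.2.2]
      rw [Finset.sum_congr rfl this, Finset.sum_const, nsmul_eq_mul]
    have hEeq : E = ∑ s, D s * ((1 / Hn) *
        ∑ k ∈ Finset.Icc 1 n, (1 / (k : ℝ)) * (1 / (n.choose k : ℝ)) *
          ∑ C ∈ Finset.univ.filter (fun C : Finset (Fin n) => C.card = k),
            ∑ i, u i (br C s)) := by
      calc E = ∑ t, D t * ∑ i, u i t := rfl
        _ = ∑ t, (∑ s, D s *
            ((1 / Hn) * ∑ k ∈ Finset.Icc 1 n, (1 / (k : ℝ)) * (1 / (n.choose k : ℝ)) *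
              ((Finset.univ.filter fun C : Finset (Fin n) =>
                C.card = k ∧ br C s = t).card : ℝ))) * ∑ i, u i t := by
            refine Finset.sum_congr rfl fun t _ => ?_
            rw [← hstat t]
        _ = ∑ s, ∑ t, (D s *
            ((1 / Hn) * ∑ k ∈ Finset.Icc 1 n, (1 / (k : ℝ)) * (1 / (n.choose k : ℝ)) *
              ((Finset.univ.filter fun C : Finset (Fin n) =>
                C.card = k ∧ br C s = t).card : ℝ))) * ∑ i, u i t := by
            rw [Finset.sum_comm]
            exact Finset.sum_congr rfl fun t _ => Finset.sum_mul _ _ _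
        _ = ∑ s, D s * ((1 / Hn) *
            ∑ k ∈ Finset.Icc 1 n, (1 / (k : ℝ)) * (1 / (n.choose k : ℝ)) *
              ∑ C ∈ Finset.univ.filter (fun C : Finset (Fin n) => C.card = k),
                ∑ i, u i (br C s)) := by
            refine Finset.sum_congr rfl fun s _ => ?_
            have inner : ∑ t : ∀ j, S j,
                (∑ k ∈ Finset.Icc 1 n, (1 / (k : ℝ)) * (1 / (n.choose k : ℝ)) *
                  ((Finset.univ.filter fun C : Finset (Fin n) =>
                    C.card = k ∧ br C s = t).card : ℝ)) * ∑ i, u i t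
                = ∑ k ∈ Finset.Icc 1 n, (1 / (k : ℝ)) * (1 / (n.choose k : ℝ)) *
                    ∑ C ∈ Finset.univ.filter (fun C : Finset (Fin n) => C.card = k),
                      ∑ i, u i (br C s) := by
              calc ∑ t : ∀ j, S j,
                  (∑ k ∈ Finset.Icc 1 n, (1 / (k : ℝ)) * (1 / (n.choose k : ℝ)) *
                    ((Finset.univ.filter fun C : Finset (Fin n) =>
                      C.card = k ∧ br C s = t).card : ℝ)) * ∑ i, u i t
                  = ∑ t : ∀ j, S j, ∑ k ∈ Finset.Icc 1 n,
                      (1 / (k : ℝ)) * (1 / (n.choose k : ℝ)) *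
                      (((Finset.univ.filter fun C : Finset (Fin n) =>
                        C.card = k ∧ br C s = t).card : ℝ) * ∑ i, u i t) := by
                    refine Finset.sum_congr rfl fun t _ => ?_
                    rw [Finset.sum_mul]
                    exact Finset.sum_congr rfl fun k _ => by ring
                _ = ∑ k ∈ Finset.Icc 1 n, ∑ t : ∀ j, S j,
                      (1 / (k : ℝ)) * (1 / (n.choose k : ℝ)) *
                      (((Finset.univ.filter fun C : Finset (Fin n) =>
                        C.card = k ∧ br C s = t).card : ℝ) * ∑ i, u i t) := Finset.sum_comm
                _ = ∑ k ∈ Finset.Icc 1 n, (1 / (k : ℝ)) * (1 / (n.choose k : ℝ)) *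
                      ∑ C ∈ Finset.univ.filter (fun C : Finset (Fin n) => C.card = k),
                        ∑ i, u i (br C s) := by
                    refine Finset.sum_congr rfl fun k hk => ?_
                    rw [← Finset.mul_sum, hstep s k hk]
            calc ∑ t : ∀ j, S j, (D s *
                ((1 / Hn) * ∑ k ∈ Finset.Icc 1 n, (1 / (k : ℝ)) * (1 / (n.choose k : ℝ)) *
                  ((Finset.univ.filter fun C : Finset (Fin n) =>
                    C.card = k ∧ br C s = t).card : ℝ))) * ∑ i, u i t
                = (D s * (1 / Hn)) * ∑ t : ∀ j, S j,
                    (∑ k ∈ Finset.Icc 1 n, (1 / (k : ℝ)) * (1 / (n.choose k : ℝ)) *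
                      ((Finset.univ.filter fun C : Finset (Fin n) =>
                        C.card = k ∧ br C s = t).card : ℝ)) * ∑ i, u i t := by
                  rw [Finset.mul_sum]
                  exact Finset.sum_congr rfl fun t _ => by ring
              _ = D s * ((1 / Hn) *
                    ∑ k ∈ Finset.Icc 1 n, (1 / (k : ℝ)) * (1 / (n.choose k : ℝ)) *
                      ∑ C ∈ Finset.univ.filter (fun C : Finset (Fin n) => C.card = k),
                        ∑ i, u i (br C s)) := by rw [inner]; ring
    -- use Part 1 under the stationary distribution
    have hEineq : (1 / Hn) * (lam * OPT) - (1 / Hn) * mu * E ≤ E := by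
      have h1 : ∑ s, D s * ((1 / Hn) * (lam * OPT - mu * ∑ i, u i s)) ≤ E := by
        rw [hEeq]
        apply Finset.sum_le_sum
        intro s _
        exact mul_le_mul_of_nonneg_left (part1 s) (hD0 s)
      have h2 : ∑ s, D s * ((1 / Hn) * (lam * OPT - mu * ∑ i, u i s))
          = (1 / Hn) * (lam * OPT) - (1 / Hn) * mu * E := by
        calc ∑ s, D s * ((1 / Hn) * (lam * OPT - mu * ∑ i, u i s))
            = ∑ s, ((1 / Hn) * (lam * OPT) * D s
                - (1 / Hn) * mu * (D s * ∑ i, u i s)) :=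
              Finset.sum_congr rfl fun s _ => by ring
          _ = (1 / Hn) * (lam * OPT) * (∑ s, D s)
                - (1 / Hn) * mu * ∑ s, D s * ∑ i, u i s := by
              rw [Finset.sum_sub_distrib, ← Finset.mul_sum, ← Finset.mul_sum]
          _ = (1 / Hn) * (lam * OPT) - (1 / Hn) * mu * E := by
              rw [hD1, mul_one]
      rw [← h2]; exact h1
    -- final algebra
    have hkey : lam * OPT ≤ Hn * E + mu * E := by
      have h3 : lam * OPT - mu * E
          = Hn * ((1 / Hn) * (lam * OPT) - (1 / Hn) * mu * E) := by
        field_simp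
      nlinarith [mul_le_mul_of_nonneg_left hEineq hHnpos.le]
    have h1mu : (0 : ℝ) < 1 + mu := by linarith
    have hgoal : (1 / Hn) * (lam / (1 + mu)) * OPT = lam * OPT / (Hn * (1 + mu)) := by
      field_simp
    rw [ge_iff_le, hgoal, div_le_iff₀ (by positivity)]
    nlinarith [mul_nonneg (mul_nonneg hE0 hmu) (sub_nonneg.mpr hHn1)]
end

section
/- Suppose a sequence of nonnegative reals W_0, W_1, …, W_T satisfies W_t ≥ (1/H_n)(λ·OPT − μ·W_{t−1}) for all t ≥ 1, where λ, μ, OPT ≥ 0. Then for each t ≥ 1, at least one of W_{t−1} and W_t is ≥ (λ/(H_n+μ))·OPT; hence the average (1/T)Σ_{t=0}^{T−1} W_t ≥ ((T−1)/(2T))·(λ/(H_n+μ))·OPT. -/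
open Finset

/-- if W_t ≥ (1/H_n)(λ·OPT − μ·W_{t−1}) for 1 ≤ t ≤ T, then for each
such t one of W_{t−1}, W_t is at least (λ/(H_n+μ))·OPT, and the average welfare over
the first T steps is at least ((T−1)/(2T))·(λ/(H_n+μ))·OPT. -/
theorem best_response_empirical_welfare (T n : ℕ) (hT : 1 ≤ T) (hn : 1 ≤ n)
    (Hn : ℝ) (hHn : Hn = ∑ k ∈ Finset.range n, 1 / ((k : ℝ) + 1))
    (lam mu OPT : ℝ) (hlam : 0 ≤ lam) (hmu : 0 ≤ mu) (hOPT : 0 ≤ OPT)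
    (W : ℕ → ℝ) (hW : ∀ t, t ≤ T → 0 ≤ W t)
    (hrec : ∀ t, 1 ≤ t → t ≤ T → W t ≥ (1 / Hn) * (lam * OPT - mu * W (t - 1))) :
    (∀ t, 1 ≤ t → t ≤ T →
      W (t - 1) ≥ lam / (Hn + mu) * OPT ∨ W t ≥ lam / (Hn + mu) * OPT) ∧
    (1 / (T : ℝ)) * ∑ t ∈ Finset.range T, W t ≥
      ((T : ℝ) - 1) / (2 * T) * (lam / (Hn + mu)) * OPT := by
  have hHpos : 0 < Hn := by
    rw [hHn]
    apply Finset.sum_pos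
    · intro k _; positivity
    · exact Finset.nonempty_range_iff.mpr (by omega)
  have hHm : 0 < Hn + mu := by linarith
  set c := lam / (Hn + mu) * OPT with hc
  have hc0 : 0 ≤ c := by positivity
  have key : ∀ t, 1 ≤ t → t ≤ T → W (t - 1) ≥ c ∨ W t ≥ c := by
    intro t ht1 htT
    by_cases h : c ≤ W (t - 1)
    · exact Or.inl h
    · right
      push_neg at h
      have h1 := hrec t ht1 htT
      have h2 : (1 / Hn) * (lam * OPT - mu * c) ≤ (1 / Hn) * (lam * OPT - mu * W (t - 1)) := by
        apply mul_le_mul_of_nonneg_left _ (by positivity)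
        nlinarith
      have h3 : (1 / Hn) * (lam * OPT - mu * c) = c := by
        rw [hc]; field_simp; ring
      linarith
  refine ⟨key, ?_⟩
  have pair : ∀ t ∈ Finset.range (T - 1), c ≤ W t + W (t + 1) := by
    intro t ht
    simp only [Finset.mem_range] at ht
    have hk := key (t + 1) (by omega) (by omega)
    rw [Nat.add_sub_cancel] at hk
    have w1 : 0 ≤ W t := hW t (by omega)
    have w2 : 0 ≤ W (t + 1) := hW (t + 1) (by omega)
    rcases hk with h | h <;> linarith
  have hsum : ((T - 1 : ℕ) : ℝ) * c ≤ ∑ t ∈ Finset.range (T - 1), (W t + W (t + 1)) := by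
    calc ((T - 1 : ℕ) : ℝ) * c = ∑ _t ∈ Finset.range (T - 1), c := by
          rw [Finset.sum_const, Finset.card_range, nsmul_eq_mul]
      _ ≤ _ := Finset.sum_le_sum pair
  set S := ∑ t ∈ Finset.range T, W t with hS
  have hA : ∑ t ∈ Finset.range (T - 1), W t ≤ S := by
    apply Finset.sum_le_sum_of_subset_of_nonneg
    · exact Finset.range_subset_range.mpr (by omega)
    · intro i hi _
      exact hW i (by simp at hi; omega)
  have hB : ∑ t ∈ Finset.range (T - 1), W (t + 1) ≤ S := by
    have : ∑ t ∈ Finset.range (T - 1), W (t + 1) = ∑ t ∈ Finset.Ico 1 T, W t := by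
      rw [Finset.sum_Ico_eq_sum_range]
      simp [add_comm]
    rw [this, hS, Finset.range_eq_Ico]
    apply Finset.sum_le_sum_of_subset_of_nonneg
    · exact Finset.Ico_subset_Ico (by omega) le_rfl
    · intro i hi _
      exact hW i (by simp at hi; omega)
  have hsplit : ∑ t ∈ Finset.range (T - 1), (W t + W (t + 1))
      = (∑ t ∈ Finset.range (T - 1), W t) + ∑ t ∈ Finset.range (T - 1), W (t + 1) :=
    Finset.sum_add_distrib
  have h2S : ((T - 1 : ℕ) : ℝ) * c ≤ 2 * S := by
    rw [hsplit] at hsum; linarith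
  have hcast : ((T - 1 : ℕ) : ℝ) = (T : ℝ) - 1 := by
    rw [Nat.cast_sub hT]; norm_num
  rw [hcast] at h2S
  have hTpos : (0 : ℝ) < T := by exact_mod_cast hT
  have hgoal : ((T : ℝ) - 1) / (2 * T) * (lam / (Hn + mu)) * OPT
      = ((T : ℝ) - 1) * c / (2 * T) := by rw [hc]; ring
  rw [ge_iff_le, hgoal, div_le_iff₀ (by positivity)]
  have heq : (1 / (T : ℝ)) * S * (2 * T) = 2 * S := by field_simp
  linarith
end

section
/- The Rosenthal potential Φ(s) = Σ_{r∈R} Σ_{t=1}^{n_r(s)} π_r(t) of a utility congestion game with nonnegative decreasing per-resource utility functions π_r is monotone and submodular as a function on multisets of strategies: Φ(s∪t) ≥ Φ(s) for all multisets s, t, and for multisets s ⊆ t and any strategy s_i, Φ(s_i ∪ s) − Φ(s) ≥ Φ(s_i ∪ t) − Φ(t). -/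
open Finset

/-- Congestion of resource `r` in a multiset of strategies (subsets of `R`),
counted with multiplicity. -/
def msCongestion {R : Type*} [DecidableEq R] (s : Multiset (Finset R)) (r : R) : ℕ :=
  Multiset.card (s.filter fun t => r ∈ t)

/-- Rosenthal potential of a multiset of strategies. -/
def rosenthal {R : Type*} [Fintype R] [DecidableEq R] (p : R → ℕ → ℝ)
    (s : Multiset (Finset R)) : ℝ :=
  ∑ r : R, ∑ k ∈ Finset.range (msCongestion s r), p r (k + 1)


lemma msCongestion_add {R : Type*} [DecidableEq R] (s t : Multiset (Finset R)) (r : R) :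
    msCongestion (s + t) r = msCongestion s r + msCongestion t r := by
  simp [msCongestion, Multiset.filter_add]

lemma msCongestion_cons {R : Type*} [DecidableEq R] (a : Finset R)
    (s : Multiset (Finset R)) (r : R) :
    msCongestion (a ::ₘ s) r = msCongestion s r + (if r ∈ a then 1 else 0) := by
  by_cases h : r ∈ a <;> simp [msCongestion, Multiset.filter_cons, h, Nat.add_comm]

lemma msCongestion_mono {R : Type*} [DecidableEq R] {s t : Multiset (Finset R)}
    (h : s ≤ t) (r : R) : msCongestion s r ≤ msCongestion t r := by
  exact Multiset.card_le_card (Multiset.filter_le_filter _ h)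

lemma rosenthal_cons_sub {R : Type*} [Fintype R] [DecidableEq R] (p : R → ℕ → ℝ)
    (a : Finset R) (s : Multiset (Finset R)) :
    rosenthal p (a ::ₘ s) - rosenthal p s
      = ∑ r : R, (if r ∈ a then p r (msCongestion s r + 1) else 0) := by
  rw [rosenthal, rosenthal, ← Finset.sum_sub_distrib]
  refine Finset.sum_congr rfl fun r _ => ?_
  rw [msCongestion_cons]
  by_cases h : r ∈ a <;> simp [h, Finset.sum_range_succ]

/-- the Rosenthal potential of a utility congestion game with
nonnegative decreasing resource utilities is monotone and submodular as a multiset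
function. -/
theorem rosenthal_monotone_submodular {R : Type*} [Fintype R] [DecidableEq R]
    (p : R → ℕ → ℝ)
    (hp0 : ∀ r k, 0 ≤ p r k)
    (hpdec : ∀ r, ∀ k l : ℕ, k ≤ l → p r l ≤ p r k) :
    (∀ s t : Multiset (Finset R), rosenthal p s ≤ rosenthal p (s + t)) ∧
    (∀ s t : Multiset (Finset R), s ≤ t → ∀ a : Finset R,
      rosenthal p (a ::ₘ t) - rosenthal p t ≤ rosenthal p (a ::ₘ s) - rosenthal p s) := by
  constructor
  · intro s t
    refine Finset.sum_le_sum fun r _ => ?_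
    refine Finset.sum_le_sum_of_subset_of_nonneg ?_ (fun k _ _ => hp0 r (k+1))
    exact Finset.range_subset_range.2 (by rw [msCongestion_add]; omega)
  · intro s t hst a
    rw [rosenthal_cons_sub, rosenthal_cons_sub]
    refine Finset.sum_le_sum fun r _ => ?_
    by_cases h : r ∈ a <;> simp [h]
    exact hpdec r _ _ (by have := msCongestion_mono hst r; omega)
end

section
/- In a utility congestion game with resource utilities π_r(k) = v_r/k (v_r ≥ 0), the Rosenthal potential and social welfare satisfy SW(s) ≤ Φ(s) ≤ H_n·SW(s) for every profile s of n players. -/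
open Finset

/-- in a utility congestion game with π_r(k) = v_r/k, the Rosenthal
potential and the social welfare satisfy SW(s) ≤ Φ(s) ≤ H_n·SW(s). -/
theorem fair_sharing_potential_close {n : ℕ} {R : Type*} [Fintype R] [DecidableEq R]
    (v : R → ℝ) (hv : ∀ r, 0 ≤ v r)
    (s : Fin n → Finset R) :
    (∑ r ∈ Finset.univ.filter (fun r : R => 0 < congestion s r), v r) ≤
      (∑ r : R, ∑ k ∈ Finset.range (congestion s r), v r / ((k : ℝ) + 1)) ∧
    (∑ r : R, ∑ k ∈ Finset.range (congestion s r), v r / ((k : ℝ) + 1)) ≤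
      (∑ k ∈ Finset.range n, 1 / ((k : ℝ) + 1)) *
        ∑ r ∈ Finset.univ.filter (fun r : R => 0 < congestion s r), v r := by
  have hcong_le : ∀ r : R, congestion s r ≤ n := fun r => by
    have := Finset.card_filter_le (Finset.univ : Finset (Fin n)) (fun i => r ∈ s i)
    simpa [congestion] using this
  have hterm_nonneg : ∀ r : R, 0 ≤ ∑ k ∈ Finset.range (congestion s r), v r / ((k : ℝ) + 1) := by
    intro r
    apply Finset.sum_nonneg
    intro k _
    exact div_nonneg (hv r) (by positivity)
  constructor
  · -- lower bound
    have h1 : (∑ r ∈ Finset.univ.filter (fun r : R => 0 < congestion s r), v r) ≤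
        ∑ r ∈ Finset.univ.filter (fun r : R => 0 < congestion s r),
          ∑ k ∈ Finset.range (congestion s r), v r / ((k : ℝ) + 1) := by
      apply Finset.sum_le_sum
      intro r hr
      have hr' : 0 < congestion s r := (Finset.mem_filter.mp hr).2
      have h0 : (0 : ℕ) ∈ Finset.range (congestion s r) := Finset.mem_range.mpr hr'
      have := Finset.single_le_sum (f := fun k : ℕ => v r / ((k : ℝ) + 1))
        (fun k _ => div_nonneg (hv r) (by positivity)) h0
      simpa using this
    refine h1.trans ?_
    apply Finset.sum_le_sum_of_subset_of_nonneg (Finset.filter_subset _ _)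
    intro r _ _
    exact hterm_nonneg r
  · -- upper bound
    rw [Finset.mul_sum]
    calc (∑ r : R, ∑ k ∈ Finset.range (congestion s r), v r / ((k : ℝ) + 1))
        = ∑ r ∈ Finset.univ.filter (fun r : R => 0 < congestion s r),
            ∑ k ∈ Finset.range (congestion s r), v r / ((k : ℝ) + 1) :=
          (Finset.sum_subset (Finset.filter_subset _ _) (by
            intro r _ hr
            have : ¬ 0 < congestion s r := by
              simpa using hr
            have h0 : congestion s r = 0 := Nat.eq_zero_of_not_pos this
            simp [h0])).symm
      _ ≤ ∑ r ∈ Finset.univ.filter (fun r : R => 0 < congestion s r),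
            (∑ k ∈ Finset.range n, 1 / ((k : ℝ) + 1)) * v r := by
          apply Finset.sum_le_sum
          intro r _
          have h1 : (∑ k ∈ Finset.range (congestion s r), v r / ((k : ℝ) + 1)) =
              v r * ∑ k ∈ Finset.range (congestion s r), 1 / ((k : ℝ) + 1) := by
            rw [Finset.mul_sum]
            apply Finset.sum_congr rfl
            intro k _
            field_simp
          rw [h1, mul_comm]
          apply mul_le_mul_of_nonneg_right _ (hv r)
          apply Finset.sum_le_sum_of_subset_of_nonneg
          · exact Finset.range_subset_range.mpr (hcong_le r)
          · intro k _ _; positivity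
end

section
/- Let v : ℝ≥0^m → ℝ≥0 be monotone in each coordinate and satisfy the decreasing marginal contribution property within each skill group g of a partition 𝒢 of the m coordinates (holding coordinates outside g fixed). Then for every effort vector x, Σ_{k=1}^m ∂_k v(x) ≤ |𝒢| · v(x), where ∂_k v(x) = v(x) − v(0^k, x_{-k}) is player k's marginal contribution. -/
open Finset

/-- if `v` is monotone and has decreasing marginal contributions within
each skill group of a partition of the coordinates into `g` groups, then the sum of
marginal contributions is at most `g · v(x)`. -/
theorem sum_marginals_le_groups_mul {m g : ℕ}
    (v : (Fin m → ℝ) → ℝ)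
    (hv0 : ∀ x : Fin m → ℝ, (∀ j, 0 ≤ x j) → 0 ≤ v x)
    (hmono : ∀ x y : Fin m → ℝ, (∀ j, 0 ≤ x j) → (∀ j, x j ≤ y j) → v x ≤ v y)
    (grp : Fin m → Fin g)
    (hdmc : ∀ (k : Fin m) (x y : Fin m → ℝ), (∀ j, 0 ≤ x j) → (∀ j, x j ≤ y j) →
      (∀ j, grp j ≠ grp k → x j = y j) → x k = y k →
      v y - v (Function.update y k 0) ≤ v x - v (Function.update x k 0))
    (x : Fin m → ℝ) (hx : ∀ j, 0 ≤ x j) :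
    ∑ k : Fin m, (v x - v (Function.update x k 0)) ≤ (g : ℝ) * v x := by
  set Z : Finset (Fin m) → (Fin m → ℝ) := fun s j => if j ∈ s then 0 else x j with hZ
  have hZnn : ∀ s j, 0 ≤ Z s j := by
    intro s j
    simp only [hZ]
    split
    · exact le_rfl
    · exact hx j
  have hZle : ∀ s j, Z s j ≤ x j := by
    intro s j
    simp only [hZ]
    split
    · exact hx j
    · exact le_rfl
  have key : ∀ (a : Fin g) (s : Finset (Fin m)), (∀ k ∈ s, grp k = a) →
      ∑ k ∈ s, (v x - v (Function.update x k 0)) ≤ v x - v (Z s) := by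
    intro a s
    induction s using Finset.induction_on with
    | empty => intro _; simp [hZ]
    | insert _ _ hk ih =>
      rename_i k s
      intro hgrp
      rw [Finset.sum_insert hk]
      have hs : ∀ j ∈ s, grp j = a := fun j hj => hgrp j (Finset.mem_insert_of_mem hj)
      have h1 : v x - v (Function.update x k 0) ≤ v (Z s) - v (Function.update (Z s) k 0) := by
        apply hdmc k (Z s) x (hZnn s) (hZle s)
        · intro j hj
          simp only [hZ]
          rw [if_neg]
          intro hjs
          exact hj (((hs j hjs).trans (hgrp k (Finset.mem_insert_self k s)).symm) ▸ rfl)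
        · simp only [hZ]; rw [if_neg hk]
      have h2 : Function.update (Z s) k 0 = Z (insert k s) := by
        funext j
        by_cases hjk : j = k
        · subst hjk; simp [hZ]
        · simp [hZ, Function.update_of_ne hjk, Finset.mem_insert, hjk]
      rw [h2] at h1
      linarith [ih hs]
  rw [← Finset.sum_fiberwise Finset.univ grp (fun k => v x - v (Function.update x k 0))]
  have hbound : ∀ a : Fin g,
      ∑ k ∈ Finset.univ.filter (fun k => grp k = a), (v x - v (Function.update x k 0)) ≤ v x := by
    intro a
    have h := key a (Finset.univ.filter (fun k => grp k = a))
      (fun k hk => (Finset.mem_filter.mp hk).2)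
    have h0 := hv0 (Z (Finset.univ.filter (fun k => grp k = a))) (hZnn _)
    linarith
  calc ∑ a : Fin g, ∑ k ∈ Finset.univ.filter (fun k => grp k = a),
        (v x - v (Function.update x k 0)) ≤ ∑ _a : Fin g, v x :=
        Finset.sum_le_sum (fun a _ => hbound a)
    _ = (g : ℝ) * v x := by simp [Finset.sum_const, nsmul_eq_mul]
end

section
/- In the welfare sharing game with projects whose value functions satisfy the skill-group-wise decreasing marginal contribution property, each player's proportional utility share satisfies u_i(x) ≥ (1/max_j |𝒢_j|) · Σ_{j∈P_i} ∂_i v_j(x_j), i.e. each player receives at least a 1/max_j |𝒢_j| fraction of his marginal contribution to the welfare; hence the game is (γ,γ)-coalitionally smooth with γ = 1/max_j |𝒢_j|. -/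
open Finset

section WelfareSharing

variable {n m : ℕ}

/-- Effort vector at project `j` from effort matrix `x`. -/
def proj (x : Fin n → Fin m → ℝ) (j : Fin m) : Fin n → ℝ := fun i => x i j

/-- Marginal contribution of player `i` to the value of project `j`. -/
noncomputable def marg (v : Fin m → (Fin n → ℝ) → ℝ) (x : Fin n → Fin m → ℝ) (j : Fin m)
    (i : Fin n) : ℝ :=
  v j (proj x j) - v j (Function.update (proj x j) i 0)

/-- Proportional-share utility of player `i` in the welfare sharing game. -/
noncomputable def shareUtil (N : Fin m → Finset (Fin n)) (v : Fin m → (Fin n → ℝ) → ℝ)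
    (x : Fin n → Fin m → ℝ) (i : Fin n) : ℝ :=
  ∑ j ∈ Finset.univ.filter (fun j : Fin m => i ∈ N j),
    (marg v x j i / ∑ k ∈ N j, marg v x j k) * v j (proj x j)

/-- Social welfare: total value produced. -/
noncomputable def totalValue (v : Fin m → (Fin n → ℝ) → ℝ) (x : Fin n → Fin m → ℝ) : ℝ :=
  ∑ j : Fin m, v j (proj x j)

/-- Budget-feasible nonnegative effort matrices. -/
def Feasible (B : Fin n → ℝ) (x : Fin n → Fin m → ℝ) : Prop :=
  (∀ i j, 0 ≤ x i j) ∧ ∀ i, ∑ j : Fin m, x i j ≤ B i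

private lemma key_div {M S V g : ℝ} (hM : 0 ≤ M) (hMS : M ≤ S) (hSV : S ≤ g * V)
    (hV : 0 ≤ V) (hg : 0 < g) : M / g ≤ M / S * V := by
  rcases eq_or_lt_of_le (hM.trans hMS) with hS | hS
  · have hM0 : M = 0 := le_antisymm (hMS.trans_eq hS.symm) hM
    simp [hM0]
  · have hVpos : 0 < V := by nlinarith
    rw [div_mul_eq_mul_div, div_le_div_iff₀ hg hS]
    nlinarith

private lemma marg_nonneg (v : Fin m → (Fin n → ℝ) → ℝ)
    (hmono : ∀ (j : Fin m) (x y : Fin n → ℝ), (∀ i, x i ≤ y i) → v j x ≤ v j y)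
    (x : Fin n → Fin m → ℝ) (hx : ∀ i j, 0 ≤ x i j) (j : Fin m) (i : Fin n) :
    0 ≤ marg v x j i := by
  have h : v j (Function.update (proj x j) i 0) ≤ v j (proj x j) := by
    apply hmono
    intro k
    rcases eq_or_ne k i with rfl | hk
    · simp only [Function.update_self]
      exact hx k j
    · rw [Function.update_of_ne hk]
  simpa [marg] using sub_nonneg.mpr h

private lemma part_one (N : Fin m → Finset (Fin n)) (v : Fin m → (Fin n → ℝ) → ℝ)
    (hv0 : ∀ j x, 0 ≤ v j x)
    (hmono : ∀ (j : Fin m) (x y : Fin n → ℝ), (∀ i, x i ≤ y i) → v j x ≤ v j y)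
    (gsize : Fin m → ℕ) (maxG : ℕ) (hmaxG : 0 < maxG) (hle : ∀ j, gsize j ≤ maxG)
    (hgroup : ∀ (j : Fin m) (x : Fin n → Fin m → ℝ),
      ∑ k ∈ N j, marg v x j k ≤ (gsize j : ℝ) * v j (proj x j))
    (i : Fin n) (x : Fin n → Fin m → ℝ) (hx : ∀ i j, 0 ≤ x i j) :
    (1 / (maxG : ℝ)) * ∑ j ∈ Finset.univ.filter (fun j : Fin m => i ∈ N j), marg v x j i
      ≤ shareUtil N v x i := by
  rw [shareUtil, Finset.mul_sum]
  apply Finset.sum_le_sum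
  intro j hj
  rw [Finset.mem_filter] at hj
  have hM := marg_nonneg v hmono x hx j i
  have hMS : marg v x j i ≤ ∑ k ∈ N j, marg v x j k :=
    Finset.single_le_sum (fun k _ => marg_nonneg v hmono x hx j k) hj.2
  have hSV : ∑ k ∈ N j, marg v x j k ≤ (maxG : ℝ) * v j (proj x j) := by
    calc ∑ k ∈ N j, marg v x j k ≤ (gsize j : ℝ) * v j (proj x j) := hgroup j x
      _ ≤ (maxG : ℝ) * v j (proj x j) := by
          apply mul_le_mul_of_nonneg_right _ (hv0 _ _)
          exact_mod_cast hle j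
  have hg : (0 : ℝ) < (maxG : ℝ) := by exact_mod_cast hmaxG
  calc 1 / (maxG : ℝ) * marg v x j i = marg v x j i / (maxG : ℝ) := by ring
    _ ≤ _ := key_div hM hMS hSV (hv0 _ _) hg

/-- in the welfare sharing game with skill-group-wise decreasing
marginal contributions, every player gets at least a 1/max_j |𝒢_j| fraction of his
marginal contribution, and hence the game is (γ,γ)-coalitionally smooth with
γ = 1/max_j |𝒢_j|. -/
theorem welfare_sharing_smooth
    (N : Fin m → Finset (Fin n))
    (v : Fin m → (Fin n → ℝ) → ℝ)
    (hv0 : ∀ j x, 0 ≤ v j x)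
    (hmono : ∀ (j : Fin m) (x y : Fin n → ℝ), (∀ i, x i ≤ y i) → v j x ≤ v j y)
    (hdep : ∀ (j : Fin m) (x : Fin n → ℝ) (i : Fin n), i ∉ N j →
      v j (Function.update x i 0) = v j x)
    (gsize : Fin m → ℕ) (maxG : ℕ) (hmaxG : 0 < maxG) (hle : ∀ j, gsize j ≤ maxG)
    (hgroup : ∀ (j : Fin m) (x : Fin n → Fin m → ℝ),
      ∑ k ∈ N j, marg v x j k ≤ (gsize j : ℝ) * v j (proj x j))
    (B : Fin n → ℝ) :
    (∀ (i : Fin n) (x : Fin n → Fin m → ℝ), Feasible B x →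
      shareUtil N v x i ≥ (1 / (maxG : ℝ)) *
        ∑ j ∈ Finset.univ.filter (fun j : Fin m => i ∈ N j), marg v x j i) ∧
    (∀ sstar : Fin n → Fin m → ℝ, Feasible B sstar →
      (∀ x, Feasible B x → totalValue v x ≤ totalValue v sstar) →
      ∀ x, Feasible B x → ∀ π : Equiv.Perm (Fin n),
        ∑ i, shareUtil N v (dev x sstar (suffixSet π i)) i ≥
          (1 / (maxG : ℝ)) * totalValue v sstar -
            (1 / (maxG : ℝ)) * totalValue v x) := by
  have hfull : ∀ (w : Fin n → Fin m → ℝ) (i : Fin n),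
      ∑ j ∈ Finset.univ.filter (fun j : Fin m => i ∈ N j), marg v w j i
        = ∑ j : Fin m, marg v w j i := by
    intro w i
    rw [Finset.sum_filter]
    apply Finset.sum_congr rfl
    intro j _
    by_cases h : i ∈ N j
    · simp [h]
    · simp [h, marg, hdep j (proj w j) i h]
  constructor
  · intro i x hx
    exact part_one N v hv0 hmono gsize maxG hmaxG hle hgroup i x hx.1
  · intro sstar hs hopt x hx π
    have feas : ∀ C : Finset (Fin n), ∀ i j, 0 ≤ dev x sstar C i j := by
      intro C i j
      unfold dev
      split
      · exact hs.1 i j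
      · exact hx.1 i j
    set Cset : ℕ → Finset (Fin n) := fun t => Finset.univ.filter fun j => t ≤ (π j : ℕ)
      with hCset
    set W : ℕ → ℝ := fun t => totalValue v (dev x sstar (Cset t)) with hW
    have hsuffix : ∀ i : Fin n, suffixSet π i = Cset (π i : ℕ) := by
      intro i
      ext j
      simp only [suffixSet, hCset, Finset.mem_filter, Finset.mem_univ, true_and]
      exact Fin.le_def
    have hW0 : W 0 = totalValue v sstar := by
      have h1 : dev x sstar (Cset 0) = sstar := by
        funext l
        simp [dev, hCset]
      rw [hW]
      simp only [h1]
    have hWn : W n = totalValue v x := by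
      have h1 : dev x sstar (Cset n) = x := by
        funext l
        have : l ∉ Cset n := by
          simp only [hCset, Finset.mem_filter, Finset.mem_univ, true_and, not_le]
          exact (π l).isLt
        simp [dev, this]
      rw [hW]
      simp only [h1]
    have step : ∀ i : Fin n,
        W (π i : ℕ) - W ((π i : ℕ) + 1) ≤
          ∑ j : Fin m, marg v (dev x sstar (suffixSet π i)) j i := by
      intro i
      rw [hsuffix i, hW]
      simp only [totalValue, ← Finset.sum_sub_distrib]
      apply Finset.sum_le_sum
      intro j _
      have h2 : v j (Function.update (proj (dev x sstar (Cset (π i : ℕ))) j) i 0) ≤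
          v j (proj (dev x sstar (Cset ((π i : ℕ) + 1))) j) := by
        apply hmono
        intro l
        rcases eq_or_ne l i with rfl | hl
        · rw [Function.update_self]
          exact feas _ l j
        · rw [Function.update_of_ne hl]
          have hne : (π l : ℕ) ≠ (π i : ℕ) := fun h =>
            hl (π.injective (Fin.val_injective h))
          have hiff : ((π i : ℕ) ≤ (π l : ℕ)) ↔ ((π i : ℕ) + 1 ≤ (π l : ℕ)) := by omega
          simp only [proj, dev, hCset, Finset.mem_filter, Finset.mem_univ, true_and, hiff]
          exact le_refl _
      have : marg v (dev x sstar (Cset (π i : ℕ))) j i =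
          v j (proj (dev x sstar (Cset (π i : ℕ))) j) -
            v j (Function.update (proj (dev x sstar (Cset (π i : ℕ))) j) i 0) := rfl
      linarith [this, h2]
    have tele : ∑ k ∈ Finset.range n, (W k - W (k + 1)) = W 0 - W n :=
      Finset.sum_range_sub' W n
    have hg0 : (0 : ℝ) ≤ 1 / (maxG : ℝ) := by positivity
    rw [ge_iff_le]
    calc (1 / (maxG : ℝ)) * totalValue v sstar - (1 / (maxG : ℝ)) * totalValue v x
        = (1 / (maxG : ℝ)) * (W 0 - W n) := by rw [hW0, hWn, mul_sub]
      _ = (1 / (maxG : ℝ)) * ∑ k ∈ Finset.range n, (W k - W (k + 1)) := by rw [tele]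
      _ = (1 / (maxG : ℝ)) * ∑ i : Fin n, (W (π i : ℕ) - W ((π i : ℕ) + 1)) := by
          rw [← Fin.sum_univ_eq_sum_range (fun t => W t - W (t + 1)) n,
            ← Equiv.sum_comp π (fun k : Fin n => W (k : ℕ) - W ((k : ℕ) + 1))]
      _ ≤ (1 / (maxG : ℝ)) *
            ∑ i : Fin n, ∑ j : Fin m, marg v (dev x sstar (suffixSet π i)) j i :=
          mul_le_mul_of_nonneg_left (Finset.sum_le_sum fun i _ => step i) hg0
      _ = ∑ i : Fin n, (1 / (maxG : ℝ)) *
            ∑ j ∈ Finset.univ.filter (fun j : Fin m => i ∈ N j),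
              marg v (dev x sstar (suffixSet π i)) j i := by
          rw [Finset.mul_sum]
          exact Finset.sum_congr rfl fun i _ => by rw [hfull]
      _ ≤ ∑ i, shareUtil N v (dev x sstar (suffixSet π i)) i :=
          Finset.sum_le_sum fun i _ =>
            part_one N v hv0 hmono gsize maxG hmaxG hle hgroup i _ (feas _)
end WelfareSharing
end
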